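/- arXiv:1712.08050 — 6 statements merged into one kernel-verified Lean document; each statement's English description precedes it below -/
import Mathlib

section
/- Let H be a Krein space with fundamental decomposition H = H₊ [∔] H₋ and let C = ½(J_M + J_M⁺) where J_M is associated to a decomposition H = M₊ ∔ M₋ into maximal uniformly definite subspaces. Then C is a bounded, J-self-adjoint, J-positive operator on the Krein space (H, [·,·]) and 0 belongs to the resolvent set of C. -/
noncomputable section
open Filter Topology

namespace KreinStmt

local notation "⟪" x ", " y "⟫" => @inner ℂ _ _ x y

variable {H : Type} [NormedAddCommGroup H] [InnerProductSpace ℂ H] [CompleteSpace H]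

/-- The indefinite inner product `[f,g]` of the Krein space with fundamental symmetry `J`. -/
def indef (J : H →L[ℂ] H) (f g : H) : ℂ := ⟪J f, g⟫

/-- `J` is a fundamental symmetry: a self-adjoint involution on the Hilbert space `H`. -/
def IsFundSym (J : H →L[ℂ] H) : Prop :=
  (∀ f g : H, ⟪J f, g⟫ = ⟪f, J g⟫) ∧ ∀ f : H, J (J f) = f

/-- `M` is a (closed) positive subspace of the Krein space. -/
def IsPos (J : H →L[ℂ] H) (M : Submodule ℂ H) : Prop :=
  IsClosed (M : Set H) ∧ ∀ f ∈ M, f ≠ 0 → 0 < (indef J f f).re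

/-- `M` is a (closed) negative subspace of the Krein space. -/
def IsNeg (J : H →L[ℂ] H) (M : Submodule ℂ H) : Prop :=
  IsClosed (M : Set H) ∧ ∀ f ∈ M, f ≠ 0 → (indef J f f).re < 0

/-- Maximal positive subspace. -/
def IsMaxPos (J : H →L[ℂ] H) (M : Submodule ℂ H) : Prop :=
  IsPos J M ∧ ∀ M' : Submodule ℂ H, IsPos J M' → M ≤ M' → M' = M

/-- Maximal negative subspace. -/
def IsMaxNeg (J : H →L[ℂ] H) (M : Submodule ℂ H) : Prop :=
  IsNeg J M ∧ ∀ M' : Submodule ℂ H, IsNeg J M' → M ≤ M' → M' = M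

/-- Uniformly positive subspace. -/
def IsUnifPos (J : H →L[ℂ] H) (M : Submodule ℂ H) : Prop :=
  IsClosed (M : Set H) ∧ ∃ α > (0:ℝ), ∀ f ∈ M, α * ‖f‖ ^ 2 ≤ (indef J f f).re

/-- Uniformly negative subspace. -/
def IsUnifNeg (J : H →L[ℂ] H) (M : Submodule ℂ H) : Prop :=
  IsClosed (M : Set H) ∧ ∃ α > (0:ℝ), ∀ f ∈ M, α * ‖f‖ ^ 2 ≤ -(indef J f f).re

/-- Maximal uniformly positive subspace. -/
def IsMaxUnifPos (J : H →L[ℂ] H) (M : Submodule ℂ H) : Prop :=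
  IsUnifPos J M ∧ ∀ M' : Submodule ℂ H, IsUnifPos J M' → M ≤ M' → M' = M

/-- Maximal uniformly negative subspace. -/
def IsMaxUnifNeg (J : H →L[ℂ] H) (M : Submodule ℂ H) : Prop :=
  IsUnifNeg J M ∧ ∀ M' : Submodule ℂ H, IsUnifNeg J M' → M ≤ M' → M' = M

/-- Two subspaces are `J`-orthogonal. -/
def JOrth (J : H →L[ℂ] H) (M N : Submodule ℂ H) : Prop :=
  ∀ f ∈ M, ∀ g ∈ N, indef J f g = 0

/-- Indices of nonnegative vectors of the family. -/
def Npos (J : H →L[ℂ] H) (F : ℕ → H) : Set ℕ := {n | 0 ≤ (indef J (F n) (F n)).re}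

/-- Indices of negative vectors of the family. -/
def Nneg (J : H →L[ℂ] H) (F : ℕ → H) : Set ℕ := {n | (indef J (F n) (F n)).re < 0}

/-- `M₊`: closed span of the nonnegative vectors of the family. -/
def Mpos (J : H →L[ℂ] H) (F : ℕ → H) : Submodule ℂ H :=
  (Submodule.span ℂ (F '' Npos J F)).topologicalClosure

/-- `M₋`: closed span of the negative vectors of the family. -/
def Mneg (J : H →L[ℂ] H) (F : ℕ → H) : Submodule ℂ H :=
  (Submodule.span ℂ (F '' Nneg J F)).topologicalClosure

/-- `J`-frame in the sense of Definition 3 of the paper, with frame bounds `A ≤ B`. -/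
def IsJFrame (J : H →L[ℂ] H) (F : ℕ → H) (A B : ℝ) : Prop :=
  0 < A ∧ A ≤ B ∧ IsMaxPos J (Mpos J F) ∧ IsMaxNeg J (Mneg J F) ∧
  (∀ f ∈ Submodule.span ℂ (F '' Npos J F),
    A * |(indef J f f).re| ≤ ∑' n : Npos J F, ‖indef J f (F ↑n)‖ ^ 2 ∧
    ∑' n : Npos J F, ‖indef J f (F ↑n)‖ ^ 2 ≤ B * |(indef J f f).re|) ∧
  (∀ f ∈ Submodule.span ℂ (F '' Nneg J F),
    A * |(indef J f f).re| ≤ ∑' n : Nneg J F, ‖indef J f (F ↑n)‖ ^ 2 ∧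
    ∑' n : Nneg J F, ‖indef J f (F ↑n)‖ ^ 2 ≤ B * |(indef J f f).re|)


set_option maxHeartbeats 1600000 in
/-- `C = ½(J_M + J_M⁺)` is bounded, J-self-adjoint, J-positive,
and `0 ∈ ρ(C)`. -/
theorem stmt1 (J : H →L[ℂ] H) (hJ : IsFundSym J)
    (Mp Mn : Submodule ℂ H) (hMp : IsMaxUnifPos J Mp) (hMn : IsMaxUnifNeg J Mn)
    (hsum : Mp ⊔ Mn = ⊤) (hdis : Mp ⊓ Mn = ⊥)
    (JM JMadj : H →ₗ[ℂ] H)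
    (hJM : ∀ p ∈ Mp, ∀ m ∈ Mn, JM (p + m) = p - m)
    (hadj : ∀ f g : H, indef J (JM f) g = indef J f (JMadj g))
    (C : H →ₗ[ℂ] H) (hC : C = ((1:ℂ)/2) • (JM + JMadj)) :
    Continuous C ∧
    (∀ f g : H, indef J (C f) g = indef J f (C g)) ∧
    (∀ f : H, f ≠ 0 → 0 < (indef J (C f) f).re) ∧
    ∃ Ci : H →L[ℂ] H, (∀ f, Ci (C f) = f) ∧ (∀ f, C (Ci f) = f) := by
  obtain ⟨hJsa, hJinv⟩ := hJ
  -- conjugate symmetry of the indefinite inner product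
  have hconj : ∀ f g : H, indef J f g = starRingEnd ℂ (indef J g f) := by
    intro f g
    simp only [indef]
    rw [← inner_conj_symm, hJsa]
  have hcompl : IsCompl Mp Mn := ⟨disjoint_iff.2 hdis, codisjoint_iff.2 hsum⟩
  obtain ⟨⟨hMpcl, α, hα, hαle⟩, -⟩ := hMp
  obtain ⟨⟨hMncl, β, hβ, hβle⟩, -⟩ := hMn
  -- continuous projections
  set P : H →L[ℂ] Mp := Mp.linearProjOfClosedCompl Mn hcompl hMpcl hMncl with hPdef
  set Q : H →L[ℂ] Mn := Mn.linearProjOfClosedCompl Mp hcompl.symm hMncl hMpcl with hQdef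
  have hPQ : ∀ f : H, (P f : H) + (Q f : H) = f := by
    intro f
    exact
      Submodule.projection_add_projection_eq_self hcompl f
  have hJMeq : ∀ f : H, JM f = (P f : H) - (Q f : H) := by
    intro f
    have h := hJM (P f : H) (P f).2 (Q f : H) (Q f).2
    rwa [hPQ f] at h
  have hJMc : Continuous JM := by
    have h : ⇑JM = fun f => (P f : H) - (Q f : H) := funext hJMeq
    rw [h]
    exact (continuous_subtype_val.comp P.continuous).sub
      (continuous_subtype_val.comp Q.continuous)
  set JMC : H →L[ℂ] H := { toLinearMap := JM, cont := hJMc } with hJMCdef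
  set T0 : H →L[ℂ] H := J.comp JMC with hT0def
  have hT0app : ∀ f : H, T0 f = J (JM f) := fun f => rfl
  -- JMadj is continuous
  have hadj' : ∀ g : H, JMadj g = J (ContinuousLinearMap.adjoint T0 g) := by
    intro g
    have h1 : J (JMadj g) = ContinuousLinearMap.adjoint T0 g := by
      apply ext_inner_left ℂ
      intro f
      rw [ContinuousLinearMap.adjoint_inner_right, hT0app, ← hJsa]
      exact (hadj f g).symm
    rw [← h1, hJinv]
  have hJMadjc : Continuous JMadj := by
    have h : ⇑JMadj = fun g => J (ContinuousLinearMap.adjoint T0 g) := funext hadj'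
    rw [h]
    exact J.continuous.comp (ContinuousLinearMap.adjoint T0).continuous
  have hCapp : ∀ f : H, C f = ((1:ℂ)/2) • (JM f + JMadj f) := by
    intro f; rw [hC]; rfl
  have hCc : Continuous C := by
    have h : ⇑C = fun f => ((1:ℂ)/2) • (JM f + JMadj f) := funext hCapp
    rw [h]
    exact ((hJMc.add hJMadjc).const_smul _)
  -- key symmetry fact
  have hsym : ∀ f g : H, indef J (JMadj f) g = indef J f (JM g) := by
    intro f g
    rw [hconj (JMadj f) g, ← hadj g f, ← hconj]
  -- expansion lemmas
  have hCL : ∀ f g : H, indef J (C f) g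
      = ((1:ℂ)/2) * (indef J (JM f) g + indef J (JMadj f) g) := by
    intro f g
    simp only [indef, hCapp, map_smul, map_add, inner_smul_left, inner_add_left]
    rw [map_div₀, map_one]
    rw [Complex.conj_ofNat]
  have hCR : ∀ f g : H, indef J f (C g)
      = ((1:ℂ)/2) * (indef J f (JM g) + indef J f (JMadj g)) := by
    intro f g
    simp only [indef, hCapp, inner_smul_right, inner_add_right]
  -- J-self-adjointness
  have hCsa : ∀ f g : H, indef J (C f) g = indef J f (C g) := by
    intro f g
    rw [hCL, hCR, hsym f g]
    have h2 : indef J (JM f) g = indef J f (JMadj g) := hadj f g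
    rw [h2]
    ring
  -- the quadratic form of C
  have hquad : ∀ f : H, indef J (C f) f = ((indef J (JM f) f).re : ℂ) := by
    intro f
    have hwc : indef J (JMadj f) f = starRingEnd ℂ (indef J (JM f) f) := by
      rw [hsym f f, hconj]
    rw [hCL, hwc, Complex.add_conj]
    push_cast
    ring
  -- coercivity
  set c : ℝ := min α β / 2 with hcdef
  have hc : 0 < c := by positivity
  have hcoer : ∀ f : H, c * ‖f‖ ^ 2 ≤ (indef J (C f) f).re := by
    intro f
    set p : H := (P f : H) with hp
    set m : H := (Q f : H) with hm
    have hfpm : p + m = f := hPQ f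
    have hz : (indef J (JM f) f).re = (indef J p p).re - (indef J m m).re := by
      have hJMf : JM f = p - m := by rw [hp, hm]; exact hJMeq f
      have : indef J (JM f) f
          = indef J p p + indef J p m - indef J m p - indef J m m := by
        rw [hJMf]
        nth_rewrite 1 [← hfpm]
        simp only [indef, map_sub, inner_sub_left, inner_add_right]
        ring
      rw [this]
      have hmp : (indef J m p).re = (indef J p m).re := by
        rw [hconj m p, Complex.conj_re]
      simp only [Complex.sub_re, Complex.add_re, hmp]
      ring
    have hpb : α * ‖p‖ ^ 2 ≤ (indef J p p).re := hαle p (P f).2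
    have hmb : β * ‖m‖ ^ 2 ≤ -(indef J m m).re := hβle m (Q f).2
    have hnorm : ‖f‖ ^ 2 ≤ 2 * (‖p‖ ^ 2 + ‖m‖ ^ 2) := by
      have h1 : ‖f‖ ≤ ‖p‖ + ‖m‖ := by rw [← hfpm]; exact norm_add_le p m
      nlinarith [norm_nonneg f, norm_nonneg p, norm_nonneg m,
        sq_nonneg (‖p‖ - ‖m‖), sq_nonneg (‖p‖ + ‖m‖)]
    have hre : (indef J (C f) f).re = (indef J (JM f) f).re := by
      rw [hquad f, Complex.ofReal_re]
    rw [hre, hz]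
    have hmin1 : min α β ≤ α := min_le_left _ _
    have hmin2 : min α β ≤ β := min_le_right _ _
    have hminpos : 0 < min α β := lt_min hα hβ
    nlinarith [sq_nonneg ‖p‖, sq_nonneg ‖m‖]
  -- positivity
  have hpos : ∀ f : H, f ≠ 0 → 0 < (indef J (C f) f).re := by
    intro f hf
    have h1 : 0 < ‖f‖ := norm_pos_iff.2 hf
    have h2 : 0 < c * ‖f‖ ^ 2 := by positivity
    exact lt_of_lt_of_le h2 (hcoer f)
  -- the operator T = J ∘ C is self-adjoint and coercive
  set CC : H →L[ℂ] H := { toLinearMap := C, cont := hCc } with hCCdef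
  set T : H →L[ℂ] H := J.comp CC with hTdef
  have hTapp : ∀ f : H, T f = J (C f) := fun f => rfl
  have hTinner : ∀ f g : H, ⟪T f, g⟫ = indef J (C f) g := fun f g => rfl
  have hTcoer : ∀ f : H, c * ‖f‖ ^ 2 ≤ (⟪T f, f⟫).re := by
    intro f; rw [hTinner]; exact hcoer f
  have hTlb : ∀ f : H, c * ‖f‖ ≤ ‖T f‖ := by
    intro f
    rcases eq_or_ne f 0 with rfl | hf
    · simp
    · have h0 : 0 < ‖f‖ := norm_pos_iff.2 hf
      have h1 : c * ‖f‖ ^ 2 ≤ (⟪T f, f⟫).re := hTcoer f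
      have h2 : (⟪T f, f⟫).re ≤ ‖(⟪T f, f⟫ : ℂ)‖ := Complex.re_le_norm _
      have h3 : ‖(⟪T f, f⟫ : ℂ)‖ ≤ ‖T f‖ * ‖f‖ := norm_inner_le_norm _ _
      nlinarith
  have hker : T.ker = ⊥ := by
    rw [LinearMap.ker_eq_bot']
    intro x hx
    have h1 : c * ‖x‖ ≤ 0 := by
      have := hTlb x
      rw [show T x = 0 from hx] at this
      simpa using this
    have h2 : ‖x‖ ≤ 0 := nonpos_of_mul_nonpos_right (by linarith [mul_comm c ‖x‖]) hc
    exact norm_le_zero_iff.1 h2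
  have hanti : AntilipschitzWith (⟨c⁻¹, le_of_lt (inv_pos.2 hc)⟩ : NNReal) T := by
    apply T.antilipschitz_of_bound
    intro x
    show ‖x‖ ≤ c⁻¹ * ‖T x‖
    calc ‖x‖ = c⁻¹ * (c * ‖x‖) := by rw [inv_mul_cancel_left₀ hc.ne']
    _ ≤ c⁻¹ * ‖T x‖ :=
        mul_le_mul_of_nonneg_left (hTlb x) (le_of_lt (inv_pos.2 hc))
  have hclosed : IsClosed (Set.range T) :=
    hanti.isClosed_range T.uniformContinuous
  have hrange : T.range = ⊤ := by
    have hKclosed : IsClosed ((T.range : Submodule ℂ H) : Set H) := by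
      exact hclosed
    haveI : CompleteSpace (T.range : Submodule ℂ H) :=
      hKclosed.completeSpace_coe
    rw [← Submodule.orthogonal_eq_bot_iff, Submodule.eq_bot_iff]
    intro g hg
    have h1 : ⟪T g, g⟫ = 0 :=
      hg (T g) (LinearMap.mem_range_self _ g)
    have h2 : c * ‖g‖ ^ 2 ≤ 0 := by
      have := hTcoer g
      rw [h1] at this
      simpa using this
    have h3 : ‖g‖ ^ 2 ≤ 0 := nonpos_of_mul_nonpos_right (by linarith [mul_comm c (‖g‖^2)]) hc
    have h4 : ‖g‖ = 0 := by nlinarith [norm_nonneg g, sq_nonneg ‖g‖]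
    exact norm_eq_zero.1 h4
  set e : H ≃L[ℂ] H := ContinuousLinearEquiv.ofBijective T hker hrange with hedef
  have heapp : ∀ f : H, e f = T f := fun f => rfl
  refine ⟨hCc, hCsa, hpos, (e.symm : H →L[ℂ] H).comp J, ?_, ?_⟩
  · intro f
    show e.symm (J (C f)) = f
    have h1 : J (C f) = e f := (heapp f).symm
    rw [h1, e.symm_apply_apply]
  · intro f
    have h2 : e (e.symm (J f)) = J f := e.apply_symm_apply (J f)
    rw [heapp] at h2
    have h1 : J (C (e.symm (J f))) = J f := h2
    have h3 := congrArg J h1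
    rw [hJinv, hJinv] at h3
    exact h3
end KreinStmt
end
end

section
/- Let (H, [·,·]) be a Krein space with fundamental symmetry J, and let F = {f_n} be a J-frame in the sense that the subspaces M± = closure of span{f_n : sgn[f_n,f_n] = ±} are maximal definite and A|[f,f]| ≤ Σ_{n∈N±} |[f,f_n]|² ≤ B|[f,f]| holds for all f in span{F±} for constants 0 < A ≤ B. If the direct sum D = M₊ ∔ M₋ equals H, then F is a conventional frame in the Hilbert space (H, (·,·)₁) with the same frame bounds A ≤ B, where (f,g)₁ = [f₊,g₊] − [f₋,g₋]. -/
noncomputable section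
open Filter Topology

namespace KreinStmt

local notation "⟪" x ", " y "⟫" => @inner ℂ _ _ x y

variable {H : Type} [NormedAddCommGroup H] [InnerProductSpace ℂ H] [CompleteSpace H]

lemma fin_minkowski {ι : Type} (a b : ι → ℝ) (ha0 : ∀ n, 0 ≤ a n) (hb0 : ∀ n, 0 ≤ b n)
    (ha : Summable (fun n => a n ^ 2)) (hb : Summable (fun n => b n ^ 2)) (s : Finset ι) :
    ∑ n ∈ s, (a n + b n) ^ 2 ≤ (Real.sqrt (∑' n, a n ^ 2) + Real.sqrt (∑' n, b n ^ 2)) ^ 2 := by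
  set Sa := ∑' n, a n ^ 2 with hSa
  set Sb := ∑' n, b n ^ 2 with hSb
  have h1 : ∑ n ∈ s, a n ^ 2 ≤ Sa := Summable.sum_le_tsum s (fun i _ => sq_nonneg _) ha
  have h2 : ∑ n ∈ s, b n ^ 2 ≤ Sb := Summable.sum_le_tsum s (fun i _ => sq_nonneg _) hb
  have hSa0 : 0 ≤ Sa := tsum_nonneg fun i => sq_nonneg _
  have hSb0 : 0 ≤ Sb := tsum_nonneg fun i => sq_nonneg _
  have hab0 : 0 ≤ ∑ n ∈ s, a n * b n :=
    Finset.sum_nonneg fun i _ => mul_nonneg (ha0 i) (hb0 i)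
  have hcs : (∑ n ∈ s, a n * b n) ^ 2 ≤ (∑ n ∈ s, a n ^ 2) * ∑ n ∈ s, b n ^ 2 :=
    Finset.sum_mul_sq_le_sq_mul_sq s a b
  have h3 : ∑ n ∈ s, a n * b n ≤ Real.sqrt Sa * Real.sqrt Sb := by
    have hle : (∑ n ∈ s, a n * b n) ^ 2 ≤ Sa * Sb :=
      le_trans hcs (mul_le_mul h1 h2 (Finset.sum_nonneg fun i _ => sq_nonneg _) hSa0)
    calc ∑ n ∈ s, a n * b n = Real.sqrt ((∑ n ∈ s, a n * b n) ^ 2) := (Real.sqrt_sq hab0).symm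
      _ ≤ Real.sqrt (Sa * Sb) := Real.sqrt_le_sqrt hle
      _ = Real.sqrt Sa * Real.sqrt Sb := Real.sqrt_mul hSa0 _
  have expand : ∑ n ∈ s, (a n + b n) ^ 2
      = ∑ n ∈ s, a n ^ 2 + 2 * ∑ n ∈ s, (a n * b n) + ∑ n ∈ s, b n ^ 2 := by
    rw [Finset.mul_sum, ← Finset.sum_add_distrib, ← Finset.sum_add_distrib]
    exact Finset.sum_congr rfl fun n _ => by ring
  rw [expand]
  nlinarith [Real.sq_sqrt hSa0, Real.sq_sqrt hSb0, Real.sqrt_nonneg Sa, Real.sqrt_nonneg Sb]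

omit [CompleteSpace H] in
lemma indef_re_abs_le (J : H →L[ℂ] H) (h : H) :
    |(indef J h h).re| ≤ ‖J‖ * ‖h‖ ^ 2 := by
  calc |(indef J h h).re| ≤ ‖indef J h h‖ := Complex.abs_re_le_norm _
    _ ≤ ‖J h‖ * ‖h‖ := norm_inner_le_norm _ _
    _ ≤ (‖J‖ * ‖h‖) * ‖h‖ :=
        mul_le_mul_of_nonneg_right (J.le_opNorm h) (norm_nonneg _)
    _ = ‖J‖ * ‖h‖ ^ 2 := by ring

omit [CompleteSpace H] in
lemma indef_cont (J : H →L[ℂ] H) (v : H) : Continuous fun g : H => indef J g v :=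
  (J.continuous).inner continuous_const

lemma key (J : H →L[ℂ] H) (N : Set ℕ) (F : ℕ → H) (A B : ℝ) (hA : 0 < A) (hB : 0 < B)
    (hne : ∀ f ∈ (Submodule.span ℂ (F '' N)).topologicalClosure, f ≠ 0 → (indef J f f).re ≠ 0)
    (hfr : ∀ f ∈ Submodule.span ℂ (F '' N),
      A * |(indef J f f).re| ≤ ∑' n : N, ‖indef J f (F ↑n)‖ ^ 2 ∧
      ∑' n : N, ‖indef J f (F ↑n)‖ ^ 2 ≤ B * |(indef J f f).re|) :
    ∀ g ∈ (Submodule.span ℂ (F '' N)).topologicalClosure,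
      Summable (fun n : N => ‖indef J g (F ↑n)‖ ^ 2) ∧
      A * |(indef J g g).re| ≤ ∑' n : N, ‖indef J g (F ↑n)‖ ^ 2 ∧
      ∑' n : N, ‖indef J g (F ↑n)‖ ^ 2 ≤ B * |(indef J g g).re| := by
  set S := Submodule.span ℂ (F '' N) with hS
  -- summability on the span
  have hsumm : ∀ f ∈ S, Summable (fun n : N => ‖indef J f (F ↑n)‖ ^ 2) := by
    intro f hf
    by_cases hf0 : f = 0
    · subst hf0
      have : (fun n : N => ‖indef J (0:H) (F ↑n)‖ ^ 2) = fun _ => 0 := by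
        funext n; simp [indef]
      rw [this]; exact summable_zero
    · by_contra hns
      have h1 := (hfr f hf).1
      rw [tsum_eq_zero_of_not_summable hns] at h1
      have habs : 0 < |(indef J f f).re| :=
        abs_pos.mpr (hne f (S.le_topologicalClosure hf) hf0)
      nlinarith
  -- continuity facts
  have hcontS : ∀ s : Finset N,
      Continuous fun g : H => ∑ n ∈ s, ‖indef J g (F ↑n)‖ ^ 2 := by
    intro s
    exact continuous_finset_sum s fun n _ => ((indef_cont J (F ↑n)).norm.pow 2)
  have hcontB : Continuous fun g : H => B * |(indef J g g).re| := by
    have : Continuous fun g : H => (indef J g g : ℂ) :=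
      (J.continuous).inner continuous_id
    exact continuous_const.mul (Complex.continuous_re.comp this).abs
  -- finite-sum bound on the closure
  have hfin : ∀ g ∈ S.topologicalClosure, ∀ s : Finset N,
      ∑ n ∈ s, ‖indef J g (F ↑n)‖ ^ 2 ≤ B * |(indef J g g).re| := by
    intro g hg s
    have hgc : g ∈ closure (S : Set H) := by
      rw [← Submodule.topologicalClosure_coe]; exact hg
    obtain ⟨u, hu_mem, hu_lim⟩ := mem_closure_iff_seq_limit.mp hgc
    refine le_of_tendsto_of_tendsto'
      (((hcontS s).tendsto g).comp hu_lim) ((hcontB.tendsto g).comp hu_lim)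
      fun k => ?_
    exact le_trans
      (Summable.sum_le_tsum s (fun i _ => sq_nonneg _) (hsumm (u k) (hu_mem k)))
      (hfr (u k) (hu_mem k)).2
  -- summability and upper bound on the closure
  have hsm : ∀ g ∈ S.topologicalClosure, Summable (fun n : N => ‖indef J g (F ↑n)‖ ^ 2) :=
    fun g hg => summable_of_sum_le (fun n => sq_nonneg _) (hfin g hg)
  have hub : ∀ g ∈ S.topologicalClosure,
      ∑' n : N, ‖indef J g (F ↑n)‖ ^ 2 ≤ B * |(indef J g g).re| :=
    fun g hg => Summable.tsum_le_of_sum_le (hsm g hg) (hfin g hg)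
  -- the tsum is bounded by the ambient norm on the closure
  have hnb : ∀ g ∈ S.topologicalClosure,
      ∑' n : N, ‖indef J g (F ↑n)‖ ^ 2 ≤ (B * ‖J‖) * ‖g‖ ^ 2 := by
    intro g hg
    refine le_trans (hub g hg) ?_
    have := indef_re_abs_le J g
    calc B * |(indef J g g).re| ≤ B * (‖J‖ * ‖g‖ ^ 2) :=
          mul_le_mul_of_nonneg_left this hB.le
      _ = (B * ‖J‖) * ‖g‖ ^ 2 := by ring
  -- lower bound on the closure
  intro g hg
  refine ⟨hsm g hg, ?_, hub g hg⟩
  set L := ∑' n : N, ‖indef J g (F ↑n)‖ ^ 2 with hL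
  have hL0 : 0 ≤ L := tsum_nonneg fun i => sq_nonneg _
  have hgc : g ∈ closure (S : Set H) := by
    rw [← Submodule.topologicalClosure_coe]; exact hg
  obtain ⟨u, hu_mem, hu_lim⟩ := mem_closure_iff_seq_limit.mp hgc
  set c := Real.sqrt (B * ‖J‖) with hc
  -- pointwise estimate
  have hkey : ∀ k, A * |(indef J (u k) (u k)).re| ≤ (Real.sqrt L + c * ‖u k - g‖) ^ 2 := by
    intro k
    have hd : u k - g ∈ S.topologicalClosure :=
      sub_mem (S.le_topologicalClosure (hu_mem k)) hg
    set M := ∑' n : N, ‖indef J (u k - g) (F ↑n)‖ ^ 2 with hM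
    have hM0 : 0 ≤ M := tsum_nonneg fun i => sq_nonneg _
    have hMle : M ≤ (B * ‖J‖) * ‖u k - g‖ ^ 2 := hnb _ hd
    have hsqrtM : Real.sqrt M ≤ c * ‖u k - g‖ := by
      calc Real.sqrt M ≤ Real.sqrt ((B * ‖J‖) * ‖u k - g‖ ^ 2) := Real.sqrt_le_sqrt hMle
        _ = c * ‖u k - g‖ := by
          rw [Real.sqrt_mul (by positivity) _, Real.sqrt_sq (norm_nonneg _)]
  -- tsum at u k bounded via Minkowski
    have hmk : ∑' n : N, ‖indef J (u k) (F ↑n)‖ ^ 2 ≤ (Real.sqrt L + Real.sqrt M) ^ 2 := by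
      refine Summable.tsum_le_of_sum_le (hsumm (u k) (hu_mem k)) fun s => ?_
      have hptw : ∀ n : N, ‖indef J (u k) (F ↑n)‖
          ≤ ‖indef J g (F ↑n)‖ + ‖indef J (u k - g) (F ↑n)‖ := by
        intro n
        have : indef J (u k) (F ↑n) = indef J g (F ↑n) + indef J (u k - g) (F ↑n) := by
          simp only [indef]
          rw [← inner_add_left, ← map_add, add_sub_cancel]
        rw [this]; exact norm_add_le _ _
      calc ∑ n ∈ s, ‖indef J (u k) (F ↑n)‖ ^ 2
          ≤ ∑ n ∈ s, (‖indef J g (F ↑n)‖ + ‖indef J (u k - g) (F ↑n)‖) ^ 2 :=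
            Finset.sum_le_sum fun n _ =>
              pow_le_pow_left₀ (norm_nonneg _) (hptw n) 2
        _ ≤ (Real.sqrt L + Real.sqrt M) ^ 2 :=
            fin_minkowski _ _ (fun n => norm_nonneg _) (fun n => norm_nonneg _)
              (hsm g hg) (hsm _ hd) s
    refine le_trans (le_trans (hfr (u k) (hu_mem k)).1 hmk) ?_
    have h1 : Real.sqrt L + Real.sqrt M ≤ Real.sqrt L + c * ‖u k - g‖ := by linarith
    exact pow_le_pow_left₀ (by positivity) h1 2
  -- take limits
  have hlhs : Filter.Tendsto (fun k => A * |(indef J (u k) (u k)).re|) atTop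
      (nhds (A * |(indef J g g).re|)) := by
    have : Continuous fun g : H => A * |(indef J g g).re| :=
      continuous_const.mul (Complex.continuous_re.comp ((J.continuous).inner continuous_id)).abs
    exact (this.tendsto g).comp hu_lim
  have hrhs : Filter.Tendsto (fun k => (Real.sqrt L + c * ‖u k - g‖) ^ 2) atTop (nhds L) := by
    have hnorm : Filter.Tendsto (fun k => ‖u k - g‖) atTop (nhds 0) := by
      rw [← tendsto_iff_norm_sub_tendsto_zero] at *
      exact hu_lim
    have : Filter.Tendsto (fun k => (Real.sqrt L + c * ‖u k - g‖) ^ 2) atTop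
        (nhds ((Real.sqrt L + c * 0) ^ 2)) := by
      exact ((tendsto_const_nhds.add (hnorm.const_mul c)).pow 2)
    simpa [Real.sq_sqrt hL0] using this
  exact le_of_tendsto_of_tendsto' hlhs hrhs hkey

/-- Proposition 1: if `D = M₊ ∔ M₋ = H`, then a `J`-frame is a
conventional frame in the Hilbert space `(H, (·,·)₁)` with the same bounds.
The decomposition projection onto `M₊` along `M₋` is encoded by `P`, and
`(f,g)₁ = [P f, P g] - [f - P f, g - P g]`. -/
theorem stmt3 (J : H →L[ℂ] H) (hJ : IsFundSym J)
    (F : ℕ → H) (A B : ℝ) (hF : IsJFrame J F A B)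
    (hsum : Mpos J F ⊔ Mneg J F = ⊤) (hdis : Mpos J F ⊓ Mneg J F = ⊥)
    (P : H →ₗ[ℂ] H) (hP1 : ∀ f : H, P f ∈ Mpos J F)
    (hP2 : ∀ f : H, f - P f ∈ Mneg J F) :
    ∀ f : H,
      A * (indef J (P f) (P f) - indef J (f - P f) (f - P f)).re ≤
        ∑' n : ℕ, ‖indef J (P f) (P (F n)) - indef J (f - P f) (F n - P (F n))‖ ^ 2 ∧
      ∑' n : ℕ, ‖indef J (P f) (P (F n)) - indef J (f - P f) (F n - P (F n))‖ ^ 2 ≤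
        B * (indef J (P f) (P f) - indef J (f - P f) (f - P f)).re := by
  obtain ⟨hA, hAB, hMp, hMn, hfp, hfn⟩ := hF
  have hB : 0 < B := lt_of_lt_of_le hA hAB
  -- `P` fixes `Mpos` and kills `Mneg`
  have hPpos : ∀ g ∈ Mpos J F, P g = g := by
    intro g hg
    have h1 : g - P g ∈ Mpos J F ⊓ Mneg J F := ⟨sub_mem hg (hP1 g), hP2 g⟩
    rw [hdis] at h1
    exact (sub_eq_zero.mp ((Submodule.mem_bot ℂ).mp h1)).symm
  have hPneg : ∀ g ∈ Mneg J F, P g = 0 := by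
    intro g hg
    have h2 : g - (g - P g) ∈ Mneg J F := sub_mem hg (hP2 g)
    rw [sub_sub_cancel] at h2
    have h1 : P g ∈ Mpos J F ⊓ Mneg J F := ⟨hP1 g, h2⟩
    rw [hdis] at h1
    exact (Submodule.mem_bot ℂ).mp h1
  have hFpos : ∀ n ∈ Npos J F, F n ∈ Mpos J F := fun n hn =>
    Submodule.le_topologicalClosure _ (Submodule.subset_span ⟨n, hn, rfl⟩)
  have hFneg : ∀ n ∈ Nneg J F, F n ∈ Mneg J F := fun n hn =>
    Submodule.le_topologicalClosure _ (Submodule.subset_span ⟨n, hn, rfl⟩)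
  intro f
  set t : ℕ → ℝ :=
    fun n => ‖indef J (P f) (P (F n)) - indef J (f - P f) (F n - P (F n))‖ ^ 2 with ht
  -- description of the terms
  have hterm_pos : ∀ n ∈ Npos J F, t n = ‖indef J (P f) (F n)‖ ^ 2 := by
    intro n hn
    have hPF : P (F n) = F n := hPpos _ (hFpos n hn)
    simp [ht, hPF, sub_self, indef, inner_zero_right]
  have hterm_neg : ∀ n ∈ Nneg J F, t n = ‖indef J (f - P f) (F n)‖ ^ 2 := by
    intro n hn
    have hPF : P (F n) = 0 := hPneg _ (hFneg n hn)
    simp [ht, hPF, indef, inner_zero_right]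
    exact norm_sub_rev _ _
  -- apply the key lemma on both sides
  have hnepos : ∀ g ∈ (Submodule.span ℂ (F '' Npos J F)).topologicalClosure,
      g ≠ 0 → (indef J g g).re ≠ 0 :=
    fun g hg hg0 => ne_of_gt (hMp.1.2 g hg hg0)
  have hneneg : ∀ g ∈ (Submodule.span ℂ (F '' Nneg J F)).topologicalClosure,
      g ≠ 0 → (indef J g g).re ≠ 0 :=
    fun g hg hg0 => ne_of_lt (hMn.1.2 g hg hg0)
  have keypos := key J (Npos J F) F A B hA hB hnepos hfp (P f) (hP1 f)
  have keyneg := key J (Nneg J F) F A B hA hB hneneg hfn (f - P f) (hP2 f)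
  -- split the total sum
  have hcompl : (Npos J F)ᶜ = Nneg J F := by
    ext n; simp [Npos, Nneg, not_le]
  have hsp : Summable fun n : Npos J F => t ↑n := by
    have : (fun n : Npos J F => t ↑n) = fun n : Npos J F => ‖indef J (P f) (F ↑n)‖ ^ 2 := by
      funext n; exact hterm_pos ↑n n.2
    rw [this]; exact keypos.1
  have hsn : Summable fun n : Nneg J F => t ↑n := by
    have : (fun n : Nneg J F => t ↑n) = fun n : Nneg J F => ‖indef J (f - P f) (F ↑n)‖ ^ 2 := by
      funext n; exact hterm_neg ↑n n.2
    rw [this]; exact keyneg.1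
  have hsn' : Summable fun n : ((Npos J F)ᶜ : Set ℕ) => t ↑n := by
    rw [hcompl]; exact hsn
  have hsplit : (∑' n : Npos J F, t ↑n) + (∑' n : ((Npos J F)ᶜ : Set ℕ), t ↑n) = ∑' n : ℕ, t n :=
    Summable.tsum_add_tsum_compl hsp hsn'
  have htp : ∑' n : Npos J F, t ↑n = ∑' n : Npos J F, ‖indef J (P f) (F ↑n)‖ ^ 2 :=
    tsum_congr fun n => hterm_pos ↑n n.2
  have htn : (∑' n : ((Npos J F)ᶜ : Set ℕ), t ↑n)
      = ∑' n : Nneg J F, ‖indef J (f - P f) (F ↑n)‖ ^ 2 := by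
    rw [hcompl]; exact tsum_congr fun n => hterm_neg ↑n n.2
  -- the real part identity
  have hre_p : 0 ≤ (indef J (P f) (P f)).re := by
    by_cases h : P f = 0
    · simp [h, indef]
    · exact le_of_lt (hMp.1.2 _ (hP1 f) h)
  have hre_n : (indef J (f - P f) (f - P f)).re ≤ 0 := by
    by_cases h : f - P f = 0
    · simp [h, indef]
    · exact le_of_lt (hMn.1.2 _ (hP2 f) h)
  have hre : (indef J (P f) (P f) - indef J (f - P f) (f - P f)).re
      = |(indef J (P f) (P f)).re| + |(indef J (f - P f) (f - P f)).re| := by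
    rw [Complex.sub_re, abs_of_nonneg hre_p, abs_of_nonpos hre_n]; ring
  have h1 := keypos.2.1
  have h2 := keypos.2.2
  have h3 := keyneg.2.1
  have h4 := keyneg.2.2
  constructor
  · rw [hre, ← hsplit, htp, htn]
    linarith [mul_add A |(indef J (P f) (P f)).re| |(indef J (f - P f) (f - P f)).re|]
  · rw [hre, ← hsplit, htp, htn]
    linarith [mul_add B |(indef J (P f) (P f)).re| |(indef J (f - P f) (f - P f)).re|]

end KreinStmt
end
end

section
/- Let {g_n} be a frame in the Hilbert space (H, (·,·)) such that each g_n lies in H₊ or in H₋ (the fundamental decomposition subspaces), and suppose Q is a self-adjoint operator in H anticommuting with J such that each g_n ∈ D(cosh(Q/2)) and the set {cosh(Q/2) g_n} is complete in H. Then {e^{−Q/2} g_n} is a J-frame in the Krein space (H, [·,·]). -/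
noncomputable section
open Filter Topology

namespace KreinStmt

local notation "⟪" x ", " y "⟫" => @inner ℂ _ _ x y

variable {H : Type} [NormedAddCommGroup H] [InnerProductSpace ℂ H] [CompleteSpace H]

set_option maxHeartbeats 2000000 in
/-- Proposition, converse construction: if `{gₙ}` is a frame in
`(H, (·,·))` with each `gₙ` in `H₊` or `H₋` (the eigenspaces of `J`), and `Q`
is a self-adjoint operator anticommuting with `J` (encoded by the pair
`Ep = e^{Q/2}`, `Em = e^{-Q/2}` of symmetric positive mutually inverse
operators intertwined by `J`: `Ep (J x) = J (Em x)`), each `gₙ` lies in the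
domain of `cosh(Q/2) = ½(Ep + Em)` and `{cosh(Q/2) gₙ}` is complete in `H`,
then `{e^{-Q/2} gₙ}` is a `J`-frame. -/
theorem stmt9 (J : H →L[ℂ] H) (hJ : IsFundSym J)
    (G : ℕ → H) (A B : ℝ) (hA : 0 < A) (hAB : A ≤ B)
    (hGframe : ∀ f : H,
      A * ‖f‖ ^ 2 ≤ ∑' n : ℕ, ‖⟪f, G n⟫‖ ^ 2 ∧
      ∑' n : ℕ, ‖⟪f, G n⟫‖ ^ 2 ≤ B * ‖f‖ ^ 2)
    (heig : ∀ n : ℕ, J (G n) = G n ∨ J (G n) = -(G n))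
    (dom : Submodule ℂ H) (hdom : Dense (dom : Set H))
    (Ep Em : ↥dom →ₗ[ℂ] H)
    (hEpsym : ∀ x y : ↥dom, ⟪Ep x, (y : H)⟫ = ⟪(x : H), Ep y⟫)
    (hEmsym : ∀ x y : ↥dom, ⟪Em x, (y : H)⟫ = ⟪(x : H), Em y⟫)
    (hEppos : ∀ x : ↥dom, x ≠ 0 → 0 < (⟪(x : H), Ep x⟫).re)
    (hEmpos : ∀ x : ↥dom, x ≠ 0 → 0 < (⟪(x : H), Em x⟫).re)
    (hinv₁ : ∀ x : ↥dom, ∃ h : Ep x ∈ dom, Em ⟨Ep x, h⟩ = (x : H))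
    (hinv₂ : ∀ x : ↥dom, ∃ h : Em x ∈ dom, Ep ⟨Em x, h⟩ = (x : H))
    (hswap : ∀ x : ↥dom, ∃ h : J (x : H) ∈ dom, Ep ⟨J (x : H), h⟩ = J (Em x))
    (hGdom : ∀ n : ℕ, G n ∈ dom)
    (hcomplete : Dense
      (↑(Submodule.span ℂ (Set.range fun n : ℕ =>
        ((1:ℂ)/2) • (Ep ⟨G n, hGdom n⟩ + Em ⟨G n, hGdom n⟩))) : Set H)) :
    ∃ A' B' : ℝ, IsJFrame J (fun n : ℕ => Em ⟨G n, hGdom n⟩) A' B' := by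
  classical
  obtain ⟨hJsym, hJinv⟩ := hJ
  refine ⟨A, B, ?_⟩
  set F : ℕ → H := fun n : ℕ => Em ⟨G n, hGdom n⟩ with hFdef
  -- basic facts about J
  have hJinner : ∀ x y : H, ⟪J x, J y⟫ = ⟪x, y⟫ := fun x y => by rw [hJsym, hJinv]
  -- facts about the domain and the operators
  have hmemJ : ∀ x : ↥dom, J (x : H) ∈ dom := fun x => (hswap x).choose
  have hswJ : ∀ x : ↥dom, Ep ⟨J (x : H), hmemJ x⟩ = J (Em x) := fun x => (hswap x).choose_spec
  have hswJ' : ∀ x : ↥dom, Em ⟨J (x : H), hmemJ x⟩ = J (Ep x) := by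
    intro x
    have h1 := hswJ ⟨J (x : H), hmemJ x⟩
    have hx : (⟨J (J (x : H)), hmemJ ⟨J (x : H), hmemJ x⟩⟩ : ↥dom) = x := Subtype.ext (hJinv x)
    rw [hx] at h1
    have h2 := congrArg J h1
    rw [hJinv] at h2
    exact h2.symm
  have hmemEm : ∀ x : ↥dom, Em x ∈ dom := fun x => (hinv₂ x).choose
  have hEpEm : ∀ x : ↥dom, Ep ⟨Em x, hmemEm x⟩ = (x : H) := fun x => (hinv₂ x).choose_spec
  have hEpEm_inner : ∀ x y : ↥dom, ⟪Ep x, Em y⟫ = ⟪(x : H), (y : H)⟫ := by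
    intro x y
    have h := hEpsym x ⟨Em y, hmemEm y⟩
    rw [hEpEm y] at h
    exact h
  -- the operators C = cosh(Q/2), S = sinh(Q/2)
  set Cop : ↥dom →ₗ[ℂ] H := ((1 : ℂ)/2) • (Ep + Em) with hCopdef
  set Sop : ↥dom →ₗ[ℂ] H := ((1 : ℂ)/2) • (Ep - Em) with hSopdef
  have hCapp : ∀ u : ↥dom, Cop u = ((1 : ℂ)/2) • (Ep u + Em u) := fun u => rfl
  have hSapp : ∀ u : ↥dom, Sop u = ((1 : ℂ)/2) • (Ep u - Em u) := fun u => rfl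
  have hCmS : ∀ u : ↥dom, Cop u - Sop u = Em u := by
    intro u
    rw [hCapp, hSapp, ← smul_sub]
    have h : Ep u + Em u - (Ep u - Em u) = Em u + Em u := by abel
    rw [h, ← two_smul ℂ, smul_smul]
    norm_num
  have hCSnorm : ∀ u : ↥dom, ‖Cop u‖ ^ 2 = ‖(u : H)‖ ^ 2 + ‖Sop u‖ ^ 2 := by
    intro u
    have habn : ‖((1 : ℂ)/2) • (Ep u + Em u)‖ = (1/2 : ℝ) * ‖Ep u + Em u‖ := by
      rw [norm_smul]; norm_num
    have habn' : ‖((1 : ℂ)/2) • (Ep u - Em u)‖ = (1/2 : ℝ) * ‖Ep u - Em u‖ := by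
      rw [norm_smul]; norm_num
    have hre : RCLike.re ⟪Ep u, Em u⟫ = ‖(u : H)‖ ^ 2 := by
      rw [hEpEm_inner u u]
      exact inner_self_eq_norm_sq _
    have h1 := @norm_add_sq ℂ _ _ _ _ (Ep u) (Em u)
    have h2 := @norm_sub_sq ℂ _ _ _ _ (Ep u) (Em u)
    rw [hCapp, hSapp, habn, habn']
    nlinarith [h1, h2, hre]
  have hCinj : Function.Injective Cop := by
    intro u v huv
    have h0 : Cop (u - v) = 0 := by rw [map_sub, huv, sub_self]
    have h1 := hCSnorm (u - v)
    rw [h0, norm_zero] at h1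
    have h2 : ‖((u - v : ↥dom) : H)‖ = 0 := by
      nlinarith [norm_nonneg ((u - v : ↥dom) : H), norm_nonneg (Sop (u - v)),
        sq_nonneg ‖Sop (u - v)‖]
    have h3 : ((u - v : ↥dom) : H) = 0 := norm_eq_zero.mp h2
    have h4 : (u - v : ↥dom) = 0 := by exact_mod_cast h3
    exact sub_eq_zero.mp h4
  have hCJ : ∀ u : ↥dom, Cop ⟨J (u : H), hmemJ u⟩ = J (Cop u) := by
    intro u
    rw [hCapp, hCapp, hswJ u, hswJ' u, map_smul, map_add, add_comm]
  have hSJ : ∀ u : ↥dom, Sop ⟨J (u : H), hmemJ u⟩ = - J (Sop u) := by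
    intro u
    rw [hSapp, hSapp, hswJ u, hswJ' u, map_smul, map_sub, ← smul_neg]
    congr 1
    abel
  have hCsym : ∀ u v : ↥dom, ⟪Cop u, (v : H)⟫ = ⟪(u : H), Cop v⟫ := by
    intro u v
    rw [hCapp, hCapp, inner_smul_left, inner_smul_right, inner_add_left, inner_add_right,
      hEpsym, hEmsym]
    congr 1
    simp [map_div₀, map_one, map_ofNat]
  -- the range of C is dense
  set D : Submodule ℂ H := LinearMap.range Cop with hDdef
  have hDdense : Dense (D : Set H) := by
    have hle : Submodule.span ℂ (Set.range fun n : ℕ =>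
        ((1 : ℂ)/2) • (Ep ⟨G n, hGdom n⟩ + Em ⟨G n, hGdom n⟩)) ≤ D := by
      rw [Submodule.span_le]
      rintro x ⟨n, rfl⟩
      exact ⟨⟨G n, hGdom n⟩, rfl⟩
    exact hcomplete.mono (SetLike.coe_subset_coe.mpr hle)
  -- the linear equivalence onto the range
  set eC : ↥dom ≃ₗ[ℂ] ↥D := LinearEquiv.ofInjective Cop hCinj with heCdef
  have heCapp : ∀ u : ↥dom, ((eC u : ↥D) : H) = Cop u := fun u =>
    LinearEquiv.ofInjective_apply (h := hCinj) Cop u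
  have heCsymm : ∀ u : ↥dom, eC.symm ⟨Cop u, ⟨u, rfl⟩⟩ = u := by
    intro u
    apply eC.injective
    apply Subtype.ext
    rw [LinearEquiv.apply_symm_apply, heCapp]
  have hwC : ∀ w : ↥D, Cop (eC.symm w) = (w : H) := by
    intro w
    rw [← heCapp, LinearEquiv.apply_symm_apply]
  have hSnormle : ∀ u : ↥dom, ‖Sop u‖ ≤ ‖Cop u‖ := by
    intro u
    nlinarith [hCSnorm u, norm_nonneg (Sop u), norm_nonneg (Cop u), sq_nonneg ‖(u : H)‖]
  have hUnormle : ∀ u : ↥dom, ‖(u : H)‖ ≤ ‖Cop u‖ := by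
    intro u
    nlinarith [hCSnorm u, norm_nonneg ((u : H)), norm_nonneg (Cop u), sq_nonneg ‖Sop u‖]
  -- bounded operators T₀ = tanh(Q/2), R₀ = cosh(Q/2)⁻¹ on the range of C
  set T0 : ↥D →L[ℂ] H := LinearMap.mkContinuous (Sop ∘ₗ (eC.symm : ↥D →ₗ[ℂ] ↥dom)) 1 (by
    intro w
    have h1 : ‖Sop (eC.symm w)‖ ≤ ‖Cop (eC.symm w)‖ := hSnormle _
    rw [hwC] at h1
    simpa using h1) with hT0def
  set R0 : ↥D →L[ℂ] H := LinearMap.mkContinuous (dom.subtype ∘ₗ (eC.symm : ↥D →ₗ[ℂ] ↥dom)) 1 (by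
    intro w
    have h1 : ‖((eC.symm w : ↥dom) : H)‖ ≤ ‖Cop (eC.symm w)‖ := hUnormle _
    rw [hwC] at h1
    simpa using h1) with hR0def
  have hdr : DenseRange (D.subtypeL : ↥D →L[ℂ] H) := hDdense.denseRange_val
  have hui : IsUniformInducing (D.subtypeL : ↥D →L[ℂ] H) :=
    isUniformEmbedding_subtype_val.isUniformInducing
  set T : H →L[ℂ] H := T0.extend D.subtypeL with hTdef
  set R : H →L[ℂ] H := R0.extend D.subtypeL with hRdef
  have hTC : ∀ u : ↥dom, T (Cop u) = Sop u := by
    intro u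
    have h := ContinuousLinearMap.extend_eq (f := T0) (e := D.subtypeL) hdr hui ⟨Cop u, ⟨u, rfl⟩⟩
    have h2 : T0 ⟨Cop u, ⟨u, rfl⟩⟩ = Sop u := by
      rw [hT0def]
      rw [LinearMap.mkContinuous_apply]
      show Sop (eC.symm ⟨Cop u, ⟨u, rfl⟩⟩) = Sop u
      rw [heCsymm]
    rw [h2] at h
    exact h
  have hRC : ∀ u : ↥dom, R (Cop u) = (u : H) := by
    intro u
    have h := ContinuousLinearMap.extend_eq (f := R0) (e := D.subtypeL) hdr hui ⟨Cop u, ⟨u, rfl⟩⟩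
    have h2 : R0 ⟨Cop u, ⟨u, rfl⟩⟩ = (u : H) := by
      rw [hR0def]
      rw [LinearMap.mkContinuous_apply]
      show ((eC.symm ⟨Cop u, ⟨u, rfl⟩⟩ : ↥dom) : H) = (u : H)
      rw [heCsymm]
    rw [h2] at h
    exact h
  -- global identities by density
  have hDeqOn : ∀ {x : H}, x ∈ (D : Set H) → ∃ u : ↥dom, x = Cop u := by
    rintro x ⟨u, rfl⟩
    exact ⟨u, rfl⟩
  have hTR : ∀ w : H, ‖T w‖ ^ 2 + ‖R w‖ ^ 2 = ‖w‖ ^ 2 := by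
    have h := Continuous.ext_on hDdense
      (f := fun w : H => ‖T w‖ ^ 2 + ‖R w‖ ^ 2) (g := fun w : H => ‖w‖ ^ 2)
      (((T.continuous.norm).pow 2).add ((R.continuous.norm).pow 2))
      ((continuous_norm).pow 2)
      (by
        intro x hx
        obtain ⟨u, rfl⟩ := hDeqOn hx
        show ‖T (Cop u)‖ ^ 2 + ‖R (Cop u)‖ ^ 2 = ‖Cop u‖ ^ 2
        rw [hTC, hRC, hCSnorm]
        ring)
    intro w
    exact congrFun h w
  have hTJ : ∀ w : H, T (J w) = - J (T w) := by
    have h := Continuous.ext_on hDdense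
      (f := fun w : H => T (J w)) (g := fun w : H => - J (T w))
      (T.continuous.comp J.continuous)
      ((J.continuous.comp T.continuous).neg)
      (by
        intro x hx
        obtain ⟨u, rfl⟩ := hDeqOn hx
        show T (J (Cop u)) = - J (T (Cop u))
        rw [← hCJ u, hTC, hSJ, hTC])
    intro w
    exact congrFun h w
  have hRsym1 : ∀ (v : ↥dom) (w : H), ⟪R w, Cop v⟫ = ⟪w, (v : H)⟫ := by
    intro v
    have h := Continuous.ext_on hDdense
      (f := fun w : H => ⟪R w, Cop v⟫) (g := fun w : H => ⟪w, (v : H)⟫)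
      (Continuous.inner R.continuous continuous_const)
      (Continuous.inner continuous_id continuous_const)
      (by
        intro x hx
        obtain ⟨u, rfl⟩ := hDeqOn hx
        show ⟪R (Cop u), Cop v⟫ = ⟪Cop u, (v : H)⟫
        rw [hRC, hCsym])
    intro w
    exact congrFun h w
  have hRinj : ∀ w : H, R w = 0 → w = 0 := by
    intro w hw
    have h1 : ∀ v : ↥dom, ⟪w, (v : H)⟫ = 0 := by
      intro v
      rw [← hRsym1 v w, hw, inner_zero_left]
    have h2 : ∀ z : H, ⟪w, z⟫ = 0 := by
      have h := Continuous.ext_on hdom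
        (f := fun z : H => ⟪w, z⟫) (g := fun _ : H => (0 : ℂ))
        (Continuous.inner continuous_const continuous_id)
        continuous_const
        (by
          intro z hz
          exact h1 ⟨z, hz⟩)
      intro z
      exact congrFun h z
    have h3 := h2 w
    rwa [inner_self_eq_zero] at h3
  -- the projections onto H₊ and H₋
  set Pp : H →L[ℂ] H := ((1 : ℂ)/2) • (ContinuousLinearMap.id ℂ H + J) with hPpdef
  set Pm : H →L[ℂ] H := ((1 : ℂ)/2) • (ContinuousLinearMap.id ℂ H - J) with hPmdef
  have hPpapp : ∀ x : H, Pp x = ((1 : ℂ)/2) • (x + J x) := fun x => rfl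
  have hPmapp : ∀ x : H, Pm x = ((1 : ℂ)/2) • (x - J x) := fun x => rfl
  have hJPp : ∀ x : H, J (Pp x) = Pp x := by
    intro x
    rw [hPpapp, map_smul, map_add, hJinv, add_comm]
  have hJPm : ∀ x : H, J (Pm x) = - Pm x := by
    intro x
    rw [hPmapp, map_smul, map_sub, hJinv, ← smul_neg]
    congr 1
    abel
  have hPpfix : ∀ x : H, J x = x → Pp x = x := by
    intro x hx
    rw [hPpapp, hx, ← two_smul ℂ, smul_smul]
    norm_num
  have hPpzero : ∀ x : H, J x = -x → Pp x = 0 := by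
    intro x hx
    rw [hPpapp, hx, add_neg_cancel, smul_zero]
  have hPmfix : ∀ x : H, J x = -x → Pm x = x := by
    intro x hx
    rw [hPmapp, hx, sub_neg_eq_add, ← two_smul ℂ, smul_smul]
    norm_num
  have hPmzero : ∀ x : H, J x = x → Pm x = 0 := by
    intro x hx
    rw [hPmapp, hx, sub_self, smul_zero]
  have hPp0 : ∀ x : H, Pp x = 0 → J x = -x := by
    intro x hx
    rw [hPpapp] at hx
    rcases smul_eq_zero.mp hx with h | h
    · norm_num at h
    · exact eq_neg_of_add_eq_zero_right h
  have hPm0 : ∀ x : H, Pm x = 0 → J x = x := by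
    intro x hx
    rw [hPmapp] at hx
    rcases smul_eq_zero.mp hx with h | h
    · norm_num at h
    · exact (sub_eq_zero.mp h).symm
  -- the indefinite inner product on vectors of the form Em x
  have hindefEm : ∀ x y : ↥dom, indef J (Em x) (Em y) = ⟪J (x : H), (y : H)⟫ := by
    intro x y
    show ⟪J (Em x), Em y⟫ = ⟪J (x : H), (y : H)⟫
    rw [← hswJ x]
    exact hEpEm_inner ⟨J (x : H), hmemJ x⟩ y
  have hFind : ∀ n m : ℕ, indef J (F n) (F m) = ⟪J (G n), G m⟫ := fun n m =>
    hindefEm ⟨G n, hGdom n⟩ ⟨G m, hGdom m⟩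
  -- characterization of the index sets
  have hNposChar : ∀ n : ℕ, n ∈ Npos J F ↔ J (G n) = G n := by
    intro n
    constructor
    · intro hn
      rcases heig n with h | h
      · exact h
      · have h1 : (indef J (F n) (F n)).re = - ‖G n‖ ^ 2 := by
          rw [hFind n n, h, inner_neg_left]
          have : RCLike.re ⟪G n, G n⟫ = ‖G n‖ ^ 2 := inner_self_eq_norm_sq _
          simp only [Complex.neg_re]
          rw [← RCLike.re_to_complex (x := ⟪G n, G n⟫), this]
        have h2 : (0 : ℝ) ≤ (indef J (F n) (F n)).re := hn
        have h3 : G n = 0 := by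
          rw [h1] at h2
          have : ‖G n‖ = 0 := by nlinarith [norm_nonneg (G n)]
          exact norm_eq_zero.mp this
        rw [h, h3, neg_zero]
    · intro hJG
      show (0 : ℝ) ≤ (indef J (F n) (F n)).re
      rw [hFind n n, hJG]
      rw [← RCLike.re_to_complex (x := ⟪G n, G n⟫)]
      exact inner_self_nonneg
  have hNnegChar : ∀ n : ℕ, n ∈ Nneg J F → J (G n) = -(G n) := by
    intro n hn
    rcases heig n with h | h
    · exfalso
      have h2 : (indef J (F n) (F n)).re < 0 := hn
      rw [hFind n n, h, ← RCLike.re_to_complex (x := ⟪G n, G n⟫)] at h2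
      exact absurd h2 (not_lt.mpr inner_self_nonneg)
    · exact h
  have hNotPos : ∀ n : ℕ, n ∉ Npos J F → n ∈ Nneg J F := by
    intro n hn
    have hn' : ¬ (0 : ℝ) ≤ (indef J (F n) (F n)).re := hn
    show (indef J (F n) (F n)).re < 0
    exact not_le.mp hn'
  -- decomposition of span elements: positive side
  have hspanP : ∀ f ∈ Submodule.span ℂ (F '' Npos J F),
      ∃ u : ↥dom, J (u : H) = (u : H) ∧ f = Em u := by
    intro f hf
    refine Submodule.span_induction ?_ ?_ ?_ ?_ hf
    · rintro x ⟨n, hn, rfl⟩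
      exact ⟨⟨G n, hGdom n⟩, (hNposChar n).mp hn, rfl⟩
    · exact ⟨0, by simp, by simp⟩
    · rintro x y hx hy ⟨u, hu, rfl⟩ ⟨v, hv, rfl⟩
      exact ⟨u + v, by push_cast; rw [map_add, hu, hv], by rw [map_add]⟩
    · rintro c x hx ⟨u, hu, rfl⟩
      exact ⟨c • u, by push_cast; rw [map_smul, hu], by rw [map_smul]⟩
  have hspanN : ∀ f ∈ Submodule.span ℂ (F '' Nneg J F),
      ∃ u : ↥dom, J (u : H) = -(u : H) ∧ f = Em u := by
    intro f hf
    refine Submodule.span_induction ?_ ?_ ?_ ?_ hf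
    · rintro x ⟨n, hn, rfl⟩
      exact ⟨⟨G n, hGdom n⟩, hNnegChar n hn, rfl⟩
    · exact ⟨0, by simp, by simp⟩
    · rintro x y hx hy ⟨u, hu, rfl⟩ ⟨v, hv, rfl⟩
      refine ⟨u + v, ?_, by rw [map_add]⟩
      push_cast
      rw [map_add, hu, hv]
      abel
    · rintro c x hx ⟨u, hu, rfl⟩
      refine ⟨c • u, ?_, by rw [map_smul]⟩
      push_cast
      rw [map_smul, hu, smul_neg]
  -- frame inequalities: positive side
  have hzero2 : ∀ (a : ℂ), a = -a → a = 0 := by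
    intro a ha
    have : 2 * a = 0 := by linear_combination ha
    simpa using this
  have hframeP : ∀ f ∈ Submodule.span ℂ (F '' Npos J F),
      A * |(indef J f f).re| ≤ ∑' n : Npos J F, ‖indef J f (F ↑n)‖ ^ 2 ∧
      ∑' n : Npos J F, ‖indef J f (F ↑n)‖ ^ 2 ≤ B * |(indef J f f).re| := by
    intro f hf
    obtain ⟨u, hu, rfl⟩ := hspanP f hf
    have hterm : ∀ m : ℕ, indef J (Em u) (F m) = ⟪(u : H), G m⟫ := by
      intro m
      rw [show F m = Em ⟨G m, hGdom m⟩ from rfl, hindefEm u ⟨G m, hGdom m⟩, hu]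
    have hself : (indef J (Em u) (Em u)).re = ‖(u : H)‖ ^ 2 := by
      rw [hindefEm u u, hu, ← RCLike.re_to_complex (x := ⟪(u : H), (u : H)⟫)]
      exact inner_self_eq_norm_sq _
    have habs : |(indef J (Em u) (Em u)).re| = ‖(u : H)‖ ^ 2 := by
      rw [hself]
      exact abs_of_nonneg (sq_nonneg _)
    have hsum : ∑' n : Npos J F, ‖indef J (Em u) (F ↑n)‖ ^ 2
        = ∑' n : ℕ, ‖⟪(u : H), G n⟫‖ ^ 2 := by
      rw [tsum_congr (fun n : Npos J F => by rw [hterm ↑n])]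
      apply tsum_subtype_eq_of_support_subset
        (f := fun n : ℕ => ‖⟪(u : H), G n⟫‖ ^ 2) (s := Npos J F)
      intro n hn
      by_contra hcon
      have hneg := hNotPos n hcon
      have hJG := hNnegChar n hneg
      have h0 : ⟪(u : H), G n⟫ = 0 := by
        apply hzero2
        calc ⟪(u : H), G n⟫ = ⟪J (u : H), G n⟫ := by rw [hu]
          _ = ⟪(u : H), J (G n)⟫ := hJsym _ _
          _ = -⟪(u : H), G n⟫ := by rw [hJG, inner_neg_right]
      apply hn
      simp [h0]
    obtain ⟨hlow, hhigh⟩ := hGframe (u : H)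
    rw [habs, hsum]
    exact ⟨hlow, hhigh⟩
  -- frame inequalities: negative side
  have hframeN : ∀ f ∈ Submodule.span ℂ (F '' Nneg J F),
      A * |(indef J f f).re| ≤ ∑' n : Nneg J F, ‖indef J f (F ↑n)‖ ^ 2 ∧
      ∑' n : Nneg J F, ‖indef J f (F ↑n)‖ ^ 2 ≤ B * |(indef J f f).re| := by
    intro f hf
    obtain ⟨u, hu, rfl⟩ := hspanN f hf
    have hterm : ∀ m : ℕ, indef J (Em u) (F m) = -⟪(u : H), G m⟫ := by
      intro m
      rw [show F m = Em ⟨G m, hGdom m⟩ from rfl, hindefEm u ⟨G m, hGdom m⟩, hu,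
        inner_neg_left]
    have hself : (indef J (Em u) (Em u)).re = -‖(u : H)‖ ^ 2 := by
      rw [hindefEm u u, hu, inner_neg_left]
      simp only [Complex.neg_re]
      rw [← RCLike.re_to_complex (x := ⟪(u : H), (u : H)⟫), inner_self_eq_norm_sq]
    have habs : |(indef J (Em u) (Em u)).re| = ‖(u : H)‖ ^ 2 := by
      rw [hself, abs_neg]
      exact abs_of_nonneg (sq_nonneg _)
    have hsum : ∑' n : Nneg J F, ‖indef J (Em u) (F ↑n)‖ ^ 2
        = ∑' n : ℕ, ‖⟪(u : H), G n⟫‖ ^ 2 := by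
      rw [tsum_congr (fun n : Nneg J F => by rw [hterm ↑n, norm_neg])]
      apply tsum_subtype_eq_of_support_subset
        (f := fun n : ℕ => ‖⟪(u : H), G n⟫‖ ^ 2) (s := Nneg J F)
      intro n hn
      by_contra hcon
      have hposn : n ∈ Npos J F := by
        by_contra hcon2
        exact hcon (hNotPos n hcon2)
      have hJG := (hNposChar n).mp hposn
      have h0 : ⟪(u : H), G n⟫ = 0 := by
        apply hzero2
        calc ⟪(u : H), G n⟫ = ⟪(u : H), J (G n)⟫ := by rw [hJG]
          _ = ⟪J (u : H), G n⟫ := (hJsym _ _).symm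
          _ = -⟪(u : H), G n⟫ := by rw [hu, inner_neg_left]
      apply hn
      simp [h0]
    obtain ⟨hlow, hhigh⟩ := hGframe (u : H)
    rw [habs, hsum]
    exact ⟨hlow, hhigh⟩
  -- density of the positive/negative parts of the complete system
  set SpanAll : Submodule ℂ H := Submodule.span ℂ
    (Set.range fun n : ℕ => Cop ⟨G n, hGdom n⟩) with hSpanAlldef
  have hSpanAllDense : Dense (SpanAll : Set H) := hcomplete
  have hCopJGpos : ∀ n : ℕ, n ∈ Npos J F → J (Cop ⟨G n, hGdom n⟩) = Cop ⟨G n, hGdom n⟩ := by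
    intro n hn
    rw [← hCJ ⟨G n, hGdom n⟩]
    congr 1
    exact Subtype.ext ((hNposChar n).mp hn)
  have hCopJGneg : ∀ n : ℕ, n ∈ Nneg J F → J (Cop ⟨G n, hGdom n⟩) = -(Cop ⟨G n, hGdom n⟩) := by
    intro n hn
    rw [← hCJ ⟨G n, hGdom n⟩, ← map_neg]
    congr 1
    apply Subtype.ext
    show J (G n) = -(G n)
    exact hNnegChar n hn
  set Dp : Submodule ℂ H := Submodule.span ℂ
    ((fun n : ℕ => Cop ⟨G n, hGdom n⟩) '' Npos J F) with hDpdef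
  set Dm : Submodule ℂ H := Submodule.span ℂ
    ((fun n : ℕ => Cop ⟨G n, hGdom n⟩) '' Nneg J F) with hDmdef
  have hPpSpan : ∀ s ∈ SpanAll, Pp s ∈ Dp := by
    intro s hs
    refine Submodule.span_induction ?_ ?_ ?_ ?_ hs
    · rintro x ⟨n, rfl⟩
      by_cases hn : n ∈ Npos J F
      · rw [hPpfix _ (hCopJGpos n hn)]
        exact Submodule.subset_span ⟨n, hn, rfl⟩
      · rw [hPpzero _ (hCopJGneg n (hNotPos n hn))]
        exact Submodule.zero_mem _
    · rw [map_zero]; exact Submodule.zero_mem _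
    · intro x y hx hy hx' hy'
      rw [map_add]; exact Submodule.add_mem _ hx' hy'
    · intro c x hx hx'
      rw [map_smul]; exact Submodule.smul_mem _ _ hx'
  have hPmSpan : ∀ s ∈ SpanAll, Pm s ∈ Dm := by
    intro s hs
    refine Submodule.span_induction ?_ ?_ ?_ ?_ hs
    · rintro x ⟨n, rfl⟩
      by_cases hn : n ∈ Npos J F
      · rw [hPmzero _ (hCopJGpos n hn)]
        exact Submodule.zero_mem _
      · rw [hPmfix _ (hCopJGneg n (hNotPos n hn))]
        exact Submodule.subset_span ⟨n, hNotPos n hn, rfl⟩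
    · rw [map_zero]; exact Submodule.zero_mem _
    · intro x y hx hy hx' hy'
      rw [map_add]; exact Submodule.add_mem _ hx' hy'
    · intro c x hx hx'
      rw [map_smul]; exact Submodule.smul_mem _ _ hx'
  have hHpDense : ∀ w : H, J w = w → w ∈ closure (Dp : Set H) := by
    intro w hw
    have hw1 : w ∈ closure (SpanAll : Set H) := hSpanAllDense w
    have h2 : Pp w ∈ closure (Pp '' (SpanAll : Set H)) :=
      image_closure_subset_closure_image Pp.continuous ⟨w, hw1, rfl⟩
    have h3 : closure (Pp '' (SpanAll : Set H)) ⊆ closure (Dp : Set H) := by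
      apply closure_mono
      rintro x ⟨s, hs, rfl⟩
      exact hPpSpan s hs
    rw [← hPpfix w hw]
    exact h3 h2
  have hHmDense : ∀ w : H, J w = -w → w ∈ closure (Dm : Set H) := by
    intro w hw
    have hw1 : w ∈ closure (SpanAll : Set H) := hSpanAllDense w
    have h2 : Pm w ∈ closure (Pm '' (SpanAll : Set H)) :=
      image_closure_subset_closure_image Pm.continuous ⟨w, hw1, rfl⟩
    have h3 : closure (Pm '' (SpanAll : Set H)) ⊆ closure (Dm : Set H) := by
      apply closure_mono
      rintro x ⟨s, hs, rfl⟩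
      exact hPmSpan s hs
    rw [← hPmfix w hw]
    exact h3 h2
  -- the map Ψ = I - T carries Dp / Dm into the spans of the frame vectors
  set Psi : H →L[ℂ] H := ContinuousLinearMap.id ℂ H - T with hPsidef
  have hPsiapp : ∀ x : H, Psi x = x - T x := fun x => rfl
  have hPsiDp : ∀ s ∈ Dp, Psi s ∈ Submodule.span ℂ (F '' Npos J F) := by
    intro s hs
    refine Submodule.span_induction ?_ ?_ ?_ ?_ hs
    · rintro x ⟨n, hn, rfl⟩
      have : Psi (Cop ⟨G n, hGdom n⟩) = F n := by
        rw [hPsiapp, hTC, hCmS]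
      rw [this]
      exact Submodule.subset_span ⟨n, hn, rfl⟩
    · rw [map_zero]; exact Submodule.zero_mem _
    · intro x y hx hy hx' hy'
      rw [map_add]; exact Submodule.add_mem _ hx' hy'
    · intro c x hx hx'
      rw [map_smul]; exact Submodule.smul_mem _ _ hx'
  have hPsiDm : ∀ s ∈ Dm, Psi s ∈ Submodule.span ℂ (F '' Nneg J F) := by
    intro s hs
    refine Submodule.span_induction ?_ ?_ ?_ ?_ hs
    · rintro x ⟨n, hn, rfl⟩
      have : Psi (Cop ⟨G n, hGdom n⟩) = F n := by
        rw [hPsiapp, hTC, hCmS]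
      rw [this]
      exact Submodule.subset_span ⟨n, hn, rfl⟩
    · rw [map_zero]; exact Submodule.zero_mem _
    · intro x y hx hy hx' hy'
      rw [map_add]; exact Submodule.add_mem _ hx' hy'
    · intro c x hx hx'
      rw [map_smul]; exact Submodule.smul_mem _ _ hx'
  have hMposSup : ∀ w : H, J w = w → w - T w ∈ Mpos J F := by
    intro w hw
    have h1 : w ∈ closure (Dp : Set H) := hHpDense w hw
    have h2 : Psi w ∈ closure (Psi '' (Dp : Set H)) :=
      image_closure_subset_closure_image Psi.continuous ⟨w, h1, rfl⟩
    have h3 : Psi '' (Dp : Set H) ⊆ (Submodule.span ℂ (F '' Npos J F) : Set H) := by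
      rintro x ⟨s, hs, rfl⟩
      exact hPsiDp s hs
    have h4 : Psi w ∈ closure ((Submodule.span ℂ (F '' Npos J F) : Set H)) :=
      closure_mono h3 h2
    exact h4
  have hMnegSup : ∀ w : H, J w = -w → w - T w ∈ Mneg J F := by
    intro w hw
    have h1 : w ∈ closure (Dm : Set H) := hHmDense w hw
    have h2 : Psi w ∈ closure (Psi '' (Dm : Set H)) :=
      image_closure_subset_closure_image Psi.continuous ⟨w, h1, rfl⟩
    have h3 : Psi '' (Dm : Set H) ⊆ (Submodule.span ℂ (F '' Nneg J F) : Set H) := by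
      rintro x ⟨s, hs, rfl⟩
      exact hPsiDm s hs
    have h4 : Psi w ∈ closure ((Submodule.span ℂ (F '' Nneg J F) : Set H)) :=
      closure_mono h3 h2
    exact h4
  -- every element of Mpos / Mneg has the graph form
  have hMposDec : ∀ f ∈ Mpos J F, f = Pp f - T (Pp f) := by
    intro f hf
    have key : ∀ s ∈ Submodule.span ℂ (F '' Npos J F), s = Pp s - T (Pp s) := by
      intro s hs
      obtain ⟨u, hu, rfl⟩ := hspanP s hs
      have hJEm : J (Em u) = Ep u := by
        rw [← hswJ u]
        congr 1
        exact Subtype.ext hu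
      have hPpEm : Pp (Em u) = Cop u := by
        rw [hPpapp, hJEm, hCapp, add_comm]
      rw [hPpEm, hTC u, hCmS u]
    have hcl : (Mpos J F : Set H) ⊆ {x : H | x = Pp x - T (Pp x)} := by
      have hco : (Mpos J F : Set H)
          = closure ((Submodule.span ℂ (F '' Npos J F)) : Set H) := rfl
      rw [hco]
      apply closure_minimal
      · intro s hs
        exact key s hs
      · exact isClosed_eq continuous_id (Pp.continuous.sub (T.continuous.comp Pp.continuous))
    exact hcl hf
  have hMnegDec : ∀ f ∈ Mneg J F, f = Pm f - T (Pm f) := by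
    intro f hf
    have key : ∀ s ∈ Submodule.span ℂ (F '' Nneg J F), s = Pm s - T (Pm s) := by
      intro s hs
      obtain ⟨u, hu, rfl⟩ := hspanN s hs
      have hJEm : J (Em u) = -(Ep u) := by
        rw [← hswJ u, ← map_neg]
        congr 1
        exact Subtype.ext hu
      have hPmEm : Pm (Em u) = Cop u := by
        rw [hPmapp, hJEm, sub_neg_eq_add, hCapp, add_comm]
      rw [hPmEm, hTC u, hCmS u]
    have hcl : (Mneg J F : Set H) ⊆ {x : H | x = Pm x - T (Pm x)} := by
      have hco : (Mneg J F : Set H)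
          = closure ((Submodule.span ℂ (F '' Nneg J F)) : Set H) := rfl
      rw [hco]
      apply closure_minimal
      · intro s hs
        exact key s hs
      · exact isClosed_eq continuous_id (Pm.continuous.sub (T.continuous.comp Pm.continuous))
    exact hcl hf
  -- the indefinite inner product of graph vectors
  have hJTpos : ∀ w : H, J w = w → J (T w) = -(T w) := by
    intro w hw
    have h := hTJ w
    rw [hw] at h
    have h2 := congrArg (J ·) h
    rw [map_neg, hJinv] at h2
    exact h2
  have hJTneg : ∀ w : H, J w = -w → J (T w) = T w := by
    intro w hw
    have h := hTJ w
    rw [hw, map_neg] at h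
    have h3 : T w = J (T w) := neg_injective h
    exact h3.symm
  have hindefPos : ∀ w : H, J w = w → (indef J (w - T w) (w - T w)).re = ‖R w‖ ^ 2 := by
    intro w hw
    have hJT := hJTpos w hw
    show (⟪J (w - T w), w - T w⟫).re = ‖R w‖ ^ 2
    rw [map_sub, hw, hJT, sub_neg_eq_add, inner_add_left, inner_sub_right, inner_sub_right]
    have e1 : (⟪w, w⟫).re = ‖w‖ ^ 2 := by
      rw [← RCLike.re_to_complex (x := ⟪w, w⟫)]; exact inner_self_eq_norm_sq _
    have e2 : (⟪T w, T w⟫).re = ‖T w‖ ^ 2 := by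
      rw [← RCLike.re_to_complex (x := ⟪T w, T w⟫)]; exact inner_self_eq_norm_sq _
    have e3 : (⟪T w, w⟫).re = (⟪w, T w⟫).re := by
      rw [← RCLike.re_to_complex (x := ⟪T w, w⟫), ← RCLike.re_to_complex (x := ⟪w, T w⟫)]
      exact inner_re_symm _ _
    have e4 := hTR w
    simp only [Complex.add_re, Complex.sub_re]
    linarith
  have hindefNeg : ∀ w : H, J w = -w → (indef J (w - T w) (w - T w)).re = -‖R w‖ ^ 2 := by
    intro w hw
    have hJT := hJTneg w hw
    show (⟪J (w - T w), w - T w⟫).re = -‖R w‖ ^ 2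
    rw [map_sub, hw, hJT]
    have hrw : -w - T w = -(w + T w) := by abel
    rw [hrw, inner_neg_left, inner_add_left, inner_sub_right, inner_sub_right]
    have e1 : (⟪w, w⟫).re = ‖w‖ ^ 2 := by
      rw [← RCLike.re_to_complex (x := ⟪w, w⟫)]; exact inner_self_eq_norm_sq _
    have e2 : (⟪T w, T w⟫).re = ‖T w‖ ^ 2 := by
      rw [← RCLike.re_to_complex (x := ⟪T w, T w⟫)]; exact inner_self_eq_norm_sq _
    have e3 : (⟪T w, w⟫).re = (⟪w, T w⟫).re := by
      rw [← RCLike.re_to_complex (x := ⟪T w, w⟫), ← RCLike.re_to_complex (x := ⟪w, T w⟫)]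
      exact inner_re_symm _ _
    have e4 := hTR w
    simp only [Complex.neg_re, Complex.add_re, Complex.sub_re]
    linarith
  -- maximal positivity
  have hMaxPos : IsMaxPos J (Mpos J F) := by
    constructor
    · constructor
      · exact Submodule.isClosed_topologicalClosure _
      · intro f hf hf0
        have hdec := hMposDec f hf
        have hJw : J (Pp f) = Pp f := hJPp f
        have hw0 : Pp f ≠ 0 := by
          intro h0
          apply hf0
          rw [hdec, h0, map_zero, sub_zero]
        have hR0 : R (Pp f) ≠ 0 := fun h => hw0 (hRinj _ h)
        have hpos : (indef J (Pp f - T (Pp f)) (Pp f - T (Pp f))).re = ‖R (Pp f)‖ ^ 2 :=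
          hindefPos (Pp f) hJw
        rw [hdec]
        rw [hpos]
        exact pow_pos (norm_pos_iff.mpr hR0) 2
    · intro M' hM' hle
      apply le_antisymm ?_ hle
      intro f' hf'
      have hm : Pp f' - T (Pp f') ∈ Mpos J F := hMposSup (Pp f') (hJPp f')
      have hzmem : f' - (Pp f' - T (Pp f')) ∈ M' := Submodule.sub_mem M' hf' (hle hm)
      have hPpz : Pp (f' - (Pp f' - T (Pp f'))) = 0 := by
        rw [map_sub, map_sub]
        rw [hPpfix (Pp f') (hJPp f')]
        rw [hPpzero (T (Pp f')) (hJTpos (Pp f') (hJPp f'))]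
        abel
      have hJz := hPp0 _ hPpz
      have hz0 : f' - (Pp f' - T (Pp f')) = 0 := by
        by_contra hne
        have hposz := hM'.2 _ hzmem hne
        have hzre : (indef J (f' - (Pp f' - T (Pp f'))) (f' - (Pp f' - T (Pp f')))).re
            = -‖f' - (Pp f' - T (Pp f'))‖ ^ 2 := by
          show (⟪J _, _⟫).re = _
          rw [hJz, inner_neg_left]
          simp only [Complex.neg_re]
          rw [← RCLike.re_to_complex, inner_self_eq_norm_sq]
        rw [hzre] at hposz
        have hn0 : ‖f' - (Pp f' - T (Pp f'))‖ > 0 := norm_pos_iff.mpr hne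
        nlinarith
      have : f' = Pp f' - T (Pp f') := by
        have := sub_eq_zero.mp hz0
        exact this
      rw [this]
      exact hm
  -- maximal negativity
  have hMaxNeg : IsMaxNeg J (Mneg J F) := by
    constructor
    · constructor
      · exact Submodule.isClosed_topologicalClosure _
      · intro f hf hf0
        have hdec := hMnegDec f hf
        have hJw : J (Pm f) = -(Pm f) := hJPm f
        have hw0 : Pm f ≠ 0 := by
          intro h0
          apply hf0
          rw [hdec, h0, map_zero, sub_zero]
        have hR0 : R (Pm f) ≠ 0 := fun h => hw0 (hRinj _ h)
        have hneg : (indef J (Pm f - T (Pm f)) (Pm f - T (Pm f))).re = -‖R (Pm f)‖ ^ 2 :=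
          hindefNeg (Pm f) hJw
        rw [hdec, hneg]
        have : (0:ℝ) < ‖R (Pm f)‖ ^ 2 := pow_pos (norm_pos_iff.mpr hR0) 2
        linarith
    · intro M' hM' hle
      apply le_antisymm ?_ hle
      intro f' hf'
      have hm : Pm f' - T (Pm f') ∈ Mneg J F := hMnegSup (Pm f') (hJPm f')
      have hzmem : f' - (Pm f' - T (Pm f')) ∈ M' := Submodule.sub_mem M' hf' (hle hm)
      have hPmz : Pm (f' - (Pm f' - T (Pm f'))) = 0 := by
        rw [map_sub, map_sub]
        rw [hPmfix (Pm f') (hJPm f')]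
        rw [hPmzero (T (Pm f')) (hJTneg (Pm f') (hJPm f'))]
        abel
      have hJz := hPm0 _ hPmz
      have hz0 : f' - (Pm f' - T (Pm f')) = 0 := by
        by_contra hne
        have hnegz := hM'.2 _ hzmem hne
        have hzre : (indef J (f' - (Pm f' - T (Pm f'))) (f' - (Pm f' - T (Pm f')))).re
            = ‖f' - (Pm f' - T (Pm f'))‖ ^ 2 := by
          show (⟪J _, _⟫).re = _
          rw [hJz]
          rw [← RCLike.re_to_complex, inner_self_eq_norm_sq]
        rw [hzre] at hnegz
        have hn0 : ‖f' - (Pm f' - T (Pm f'))‖ > 0 := norm_pos_iff.mpr hne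
        nlinarith
      have : f' = Pm f' - T (Pm f') := sub_eq_zero.mp hz0
      rw [this]
      exact hm
  exact ⟨hA, hAB, hMaxPos, hMaxNeg, hframeP, hframeN⟩
end KreinStmt
end
end

section
/- Let F = {f_n} be an exact J-frame in a Krein space (H, [·,·]) with D = M₊ ∔ M₋ ≠ H. Then the subfamilies F± = {f_n}_{n∈N±} are exact sequences (minimal and complete) in the subspaces (M±, (·,·)) of the Hilbert space H. -/
noncomputable section
open Filter Topology

namespace KreinStmt

local notation "⟪" x ", " y "⟫" => @inner ℂ _ _ x y

variable {H : Type} [NormedAddCommGroup H] [InnerProductSpace ℂ H] [CompleteSpace H]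

/-- exact `J`-frames, case `D ≠ H`: if the `J`-frame `F` is exact
(a frame in the completion `Ĥ = K` which is minimal there), then the
subfamilies `F± = {fₙ}_{n ∈ N±}` are exact sequences (minimal and complete) in
the subspaces `(M±, (·,·))` of the Hilbert space `H`. -/
theorem stmt11 {K : Type} [NormedAddCommGroup K] [InnerProductSpace ℂ K]
    [CompleteSpace K]
    (J : H →L[ℂ] H) (hJ : IsFundSym J)
    (F : ℕ → H) (A B : ℝ) (hF : IsJFrame J F A B)
    (hne : Mpos J F ⊔ Mneg J F ≠ ⊤) (hdis : Mpos J F ⊓ Mneg J F = ⊥)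
    (ι : ↥(Mpos J F ⊔ Mneg J F) →ₗ[ℂ] K) (hdense : DenseRange ι)
    (P : ↥(Mpos J F ⊔ Mneg J F) →ₗ[ℂ] H)
    (hP : ∀ x : ↥(Mpos J F ⊔ Mneg J F), P x ∈ Mpos J F ∧ (x : H) - P x ∈ Mneg J F)
    (hι : ∀ x y : ↥(Mpos J F ⊔ Mneg J F),
      ⟪ι x, ι y⟫ = indef J (P x) (P y) - indef J ((x : H) - P x) ((y : H) - P y))
    (hFD : ∀ n : ℕ, F n ∈ Mpos J F ⊔ Mneg J F)
    -- `F` is an exact frame in `Ĥ = K` : a frame which is a minimal sequence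
    (hframe : ∀ g : K,
      A * ‖g‖ ^ 2 ≤ ∑' n : ℕ, ‖⟪g, ι ⟨F n, hFD n⟩⟫‖ ^ 2 ∧
      ∑' n : ℕ, ‖⟪g, ι ⟨F n, hFD n⟩⟫‖ ^ 2 ≤ B * ‖g‖ ^ 2)
    (hminK : ∀ m : ℕ, ι ⟨F m, hFD m⟩ ∉
      closure (↑(Submodule.span ℂ
        ((fun n : ℕ => ι ⟨F n, hFD n⟩) '' {n | n ≠ m})) : Set K)) :
    -- minimality of `F₊` in `M₊` and of `F₋` in `M₋`
    (∀ m ∈ Npos J F, F m ∉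
      closure (↑(Submodule.span ℂ (F '' {n ∈ Npos J F | n ≠ m})) : Set H)) ∧
    (∀ m ∈ Nneg J F, F m ∉
      closure (↑(Submodule.span ℂ (F '' {n ∈ Nneg J F | n ≠ m})) : Set H)) ∧
    -- completeness of `F±` in `M±`
    (Submodule.span ℂ (F '' Npos J F)).topologicalClosure = Mpos J F ∧
    (Submodule.span ℂ (F '' Nneg J F)).topologicalClosure = Mneg J F := by
  classical
  have hJnn : (0:ℝ) ≤ ‖J‖ := norm_nonneg _
  set C : ℝ := Real.sqrt ‖J‖ with hC
  -- key norm bound for ι on definite elements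
  have key : ∀ x : ↥(Mpos J F ⊔ Mneg J F), ((x : H) ∈ Mpos J F ∨ (x : H) ∈ Mneg J F) →
      ‖ι x‖ ≤ C * ‖(x : H)‖ := by
    intro x hx
    have hbound : |(indef J (x:H) (x:H)).re| ≤ ‖J‖ * ‖(x:H)‖ ^ 2 := by
      have h1 : |(indef J (x:H) (x:H)).re| ≤ ‖(indef J (x:H) (x:H))‖ :=
        Complex.abs_re_le_norm _
      have h2 : ‖(indef J (x:H) (x:H))‖ ≤ ‖J (x:H)‖ * ‖(x:H)‖ :=
        norm_inner_le_norm _ _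
      have h3 : ‖J (x:H)‖ * ‖(x:H)‖ ≤ (‖J‖ * ‖(x:H)‖) * ‖(x:H)‖ :=
        mul_le_mul_of_nonneg_right (J.le_opNorm _) (norm_nonneg _)
      calc |(indef J (x:H) (x:H)).re| ≤ ‖J (x:H)‖ * ‖(x:H)‖ := h1.trans h2
        _ ≤ (‖J‖ * ‖(x:H)‖) * ‖(x:H)‖ := h3
        _ = ‖J‖ * ‖(x:H)‖ ^ 2 := by ring
    have hsq : ‖ι x‖ ^ 2 ≤ ‖J‖ * ‖(x:H)‖ ^ 2 := by
      have h0 : ‖ι x‖ ^ 2 = (⟪ι x, ι x⟫ : ℂ).re := by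
        exact_mod_cast (inner_self_eq_norm_sq (𝕜 := ℂ) (ι x)).symm
      rcases hx with hx | hx
      · -- x ∈ Mpos : P x = x
        have hsub : (x:H) - P x ∈ Mpos J F ⊓ Mneg J F :=
          ⟨Submodule.sub_mem _ hx (hP x).1, (hP x).2⟩
        rw [hdis, Submodule.mem_bot] at hsub
        have hPx : P x = (x:H) := (sub_eq_zero.mp hsub).symm
        have hval : (⟪ι x, ι x⟫ : ℂ) = indef J (x:H) (x:H) := by
          rw [hι x x, hPx, sub_self]
          simp [indef]
        rw [h0, hval]
        exact (le_abs_self _).trans hbound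
      · -- x ∈ Mneg : P x = 0
        have hPmem : P x ∈ Mneg J F := by
          have h' := Submodule.sub_mem _ hx (hP x).2
          simpa using h'
        have hsub : P x ∈ Mpos J F ⊓ Mneg J F := ⟨(hP x).1, hPmem⟩
        rw [hdis, Submodule.mem_bot] at hsub
        have hval : (⟪ι x, ι x⟫ : ℂ) = -indef J (x:H) (x:H) := by
          rw [hι x x, hsub, sub_zero]
          simp [indef]
        rw [h0, hval]
        have h4 : -(indef J (x:H) (x:H)).re ≤ |(indef J (x:H) (x:H)).re| := neg_le_abs _
        simpa using h4.trans hbound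
    have h5 := Real.sqrt_le_sqrt hsq
    rwa [Real.sqrt_sq (norm_nonneg _), Real.sqrt_mul hJnn, Real.sqrt_sq (norm_nonneg _)] at h5
  -- generic minimality argument
  have minim : ∀ (M : Submodule ℂ H), (M = Mpos J F ∨ M = Mneg J F) →
      ∀ (S : Set ℕ) (m : ℕ), (∀ n ∈ S, n ≠ m) → F m ∈ M →
      Submodule.span ℂ (F '' S) ≤ M →
      F m ∉ closure (↑(Submodule.span ℂ (F '' S)) : Set H) := by
    intro M hM S m hSm hFmM hspanM hcl
    have hMD : M ≤ Mpos J F ⊔ Mneg J F := by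
      rcases hM with h | h
      · rw [h]; exact le_sup_left
      · rw [h]; exact le_sup_right
    obtain ⟨u, hu_mem, hu_lim⟩ := mem_closure_iff_seq_limit.mp hcl
    have hud : ∀ k, u k ∈ Mpos J F ⊔ Mneg J F := fun k => hMD (hspanM (hu_mem k))
    set x : ℕ → ↥(Mpos J F ⊔ Mneg J F) := fun k => ⟨u k, hud k⟩ with hxdef
    set T : Submodule ℂ K :=
      Submodule.span ℂ ((fun n : ℕ => ι ⟨F n, hFD n⟩) '' {n | n ≠ m}) with hT
    have hxT : ∀ k, ι (x k) ∈ T := by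
      intro k
      have hmap : Submodule.map (Mpos J F ⊔ Mneg J F).subtype
          (Submodule.span ℂ ((fun n : ℕ => (⟨F n, hFD n⟩ : ↥(Mpos J F ⊔ Mneg J F))) '' S)) =
          Submodule.span ℂ (F '' S) := by
        rw [Submodule.map_span, ← Set.image_comp]
        rfl
      have hu' : u k ∈ Submodule.map (Mpos J F ⊔ Mneg J F).subtype
          (Submodule.span ℂ ((fun n : ℕ => (⟨F n, hFD n⟩ : ↥(Mpos J F ⊔ Mneg J F))) '' S)) := by
        rw [hmap]; exact hu_mem k
      obtain ⟨y, hy, hyu⟩ := hu'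
      have hxy : x k = y := Subtype.ext hyu.symm
      have himg : ι y ∈ Submodule.map ι
          (Submodule.span ℂ ((fun n : ℕ => (⟨F n, hFD n⟩ : ↥(Mpos J F ⊔ Mneg J F))) '' S)) :=
        Submodule.mem_map_of_mem hy
      rw [Submodule.map_span, ← Set.image_comp] at himg
      have hsub : ((fun n : ℕ => ι ⟨F n, hFD n⟩) '' S) ⊆
          ((fun n : ℕ => ι ⟨F n, hFD n⟩) '' {n | n ≠ m}) :=
        Set.image_mono (fun n hn => hSm n hn)
      rw [hxy]
      exact Submodule.span_mono hsub himg
    have hlim2 : Filter.Tendsto (fun k => ι (x k)) atTop (𝓝 (ι ⟨F m, hFD m⟩)) := by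
      rw [tendsto_iff_norm_sub_tendsto_zero]
      have hb : ∀ k, ‖ι (x k) - ι ⟨F m, hFD m⟩‖ ≤ C * ‖F m - u k‖ := by
        intro k
        have hmem : F m - u k ∈ M := Submodule.sub_mem _ hFmM (hspanM (hu_mem k))
        have hcoe : (((⟨F m, hFD m⟩ : ↥(Mpos J F ⊔ Mneg J F)) - x k : ↥(Mpos J F ⊔ Mneg J F)) : H) = F m - u k := rfl
        have hmem' : ((((⟨F m, hFD m⟩ : ↥(Mpos J F ⊔ Mneg J F)) - x k : ↥(Mpos J F ⊔ Mneg J F)) : H) ∈ Mpos J F) ∨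
            ((((⟨F m, hFD m⟩ : ↥(Mpos J F ⊔ Mneg J F)) - x k : ↥(Mpos J F ⊔ Mneg J F)) : H) ∈ Mneg J F) := by
          rw [hcoe]
          rcases hM with h | h
          · exact Or.inl (h ▸ hmem)
          · exact Or.inr (h ▸ hmem)
        have hk := key ((⟨F m, hFD m⟩ : ↥(Mpos J F ⊔ Mneg J F)) - x k) hmem'
        rw [map_sub, hcoe] at hk
        rw [norm_sub_rev]
        simpa using hk
      have h0 : Filter.Tendsto (fun k => C * ‖F m - u k‖) atTop (𝓝 0) := by
        have h00 : Filter.Tendsto (fun k => ‖F m - u k‖) atTop (𝓝 0) := by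
          have h01 := hu_lim
          rw [tendsto_iff_norm_sub_tendsto_zero] at h01
          simpa [norm_sub_rev] using h01
        simpa using h00.const_mul C
      exact squeeze_zero (fun k => norm_nonneg _) hb h0
    exact hminK m (mem_closure_of_tendsto hlim2 (Filter.Eventually.of_forall hxT))
  refine ⟨?_, ?_, rfl, rfl⟩
  · intro m hm
    refine minim (Mpos J F) (Or.inl rfl) _ m (fun n hn => hn.2) ?_ ?_
    · exact Submodule.le_topologicalClosure _
        (Submodule.subset_span ⟨m, hm, rfl⟩)
    · exact le_trans (Submodule.span_mono (Set.image_mono (fun n hn => hn.1)))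
        (Submodule.le_topologicalClosure _)
  · intro m hm
    refine minim (Mneg J F) (Or.inr rfl) _ m (fun n hn => hn.2) ?_ ?_
    · exact Submodule.le_topologicalClosure _
        (Submodule.subset_span ⟨m, hm, rfl⟩)
    · exact le_trans (Submodule.span_mono (Set.image_mono (fun n hn => hn.1)))
        (Submodule.le_topologicalClosure _)
end KreinStmt
end
end

section
/- Let F = {f_n} be a J-orthogonal Schauder basis of the Hilbert space (H, (·,·)) associated with a Krein space (H, [·,·]). Then F is a J-frame if and only if F is J-bounded, i.e., 0 < A ≤ |[f_n,f_n]| ≤ B < ∞ for all n. -/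
noncomputable section
open Filter Topology

namespace KreinStmt

local notation "⟪" x ", " y "⟫" => @inner ℂ _ _ x y

variable {H : Type} [NormedAddCommGroup H] [InnerProductSpace ℂ H] [CompleteSpace H]

/-! ### Auxiliary lemmas -/

section Aux
set_option linter.unusedSectionVars false

variable {J : H →L[ℂ] H} {F : ℕ → H}

lemma indef_real (J : H →L[ℂ] H) (hJ : IsFundSym J) (f : H) :
    indef J f f = ((indef J f f).re : ℂ) := by
  have h : (starRingEnd ℂ) (indef J f f) = indef J f f := by
    unfold indef; rw [inner_conj_symm, hJ.1]
  exact (Complex.conj_eq_iff_re.mp h).symm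

lemma indef_symm (J : H →L[ℂ] H) (hJ : IsFundSym J) (x y : H) :
    indef J x y = (starRingEnd ℂ) (indef J y x) := by
  unfold indef; rw [inner_conj_symm, hJ.1]

lemma norm_indef_self (hJ : IsFundSym J) (f : H) :
    ‖indef J f f‖ = |(indef J f f).re| := by
  conv_lhs => rw [indef_real J hJ f]
  rw [Complex.norm_real, Real.norm_eq_abs]

lemma indef_continuous (J : H →L[ℂ] H) (g : H) : Continuous fun f : H => indef J f g :=
  J.continuous.inner continuous_const

lemma indef_sum_left (J : H →L[ℂ] H) (s : Finset ℕ) (c : ℕ → ℂ) (F : ℕ → H) (g : H) :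
    indef J (∑ n ∈ s, c n • F n) g = ∑ n ∈ s, (starRingEnd ℂ) (c n) * indef J (F n) g := by
  simp [indef, map_sum, sum_inner, inner_smul_left]
  exact Finset.sum_congr rfl fun _ _ => mul_comm _ _

lemma indef_sum_right (J : H →L[ℂ] H) (f : H) (s : Finset ℕ) (c : ℕ → ℂ) (F : ℕ → H) :
    indef J f (∑ n ∈ s, c n • F n) = ∑ n ∈ s, c n * indef J f (F n) := by
  simp [indef, inner_sum, inner_smul_right]

lemma indef_pair (J : H →L[ℂ] H)
    (horth : ∀ n m : ℕ, n ≠ m → indef J (F n) (F m) = 0)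
    (s : Finset ℕ) (c : ℕ → ℂ) (m : ℕ) :
    indef J (∑ n ∈ s, c n • F n) (F m)
      = if m ∈ s then (starRingEnd ℂ) (c m) * indef J (F m) (F m) else 0 := by
  rw [indef_sum_left]
  rw [Finset.sum_congr rfl (fun n _ => ?_), Finset.sum_ite_eq' s m
    (fun k => (starRingEnd ℂ) (c k) * indef J (F k) (F k))]
  by_cases h : n = m
  · subst h; simp
  · simp [h, horth n m h]

lemma indef_diag (J : H →L[ℂ] H)
    (horth : ∀ n m : ℕ, n ≠ m → indef J (F n) (F m) = 0)
    (s : Finset ℕ) (c : ℕ → ℂ) :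
    indef J (∑ n ∈ s, c n • F n) (∑ n ∈ s, c n • F n)
      = ∑ n ∈ s, (‖c n‖ : ℂ) ^ 2 * indef J (F n) (F n) := by
  rw [indef_sum_right]
  refine Finset.sum_congr rfl fun m hm => ?_
  rw [indef_pair J horth, if_pos hm, ← mul_assoc, mul_comm (c m), Complex.conj_mul']

lemma indef_diag_re (J : H →L[ℂ] H)
    (horth : ∀ n m : ℕ, n ≠ m → indef J (F n) (F m) = 0)
    (s : Finset ℕ) (c : ℕ → ℂ) :
    (indef J (∑ n ∈ s, c n • F n) (∑ n ∈ s, c n • F n)).re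
      = ∑ n ∈ s, ‖c n‖ ^ 2 * (indef J (F n) (F n)).re := by
  rw [indef_diag J horth, Complex.re_sum]
  refine Finset.sum_congr rfl fun n _ => ?_
  rw [← Complex.ofReal_pow, Complex.re_ofReal_mul]

lemma coeff_eq (J : H →L[ℂ] H)
    (horth : ∀ n m : ℕ, n ≠ m → indef J (F n) (F m) = 0)
    {c : ℕ → ℂ} {f : H}
    (hc : Tendsto (fun N : ℕ => ∑ n ∈ Finset.range N, c n • F n) atTop (nhds f)) (m : ℕ) :
    indef J f (F m) = (starRingEnd ℂ) (c m) * indef J (F m) (F m) := by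
  have h1 : Tendsto (fun N : ℕ => indef J (∑ n ∈ Finset.range N, c n • F n) (F m)) atTop
      (nhds (indef J f (F m))) := ((indef_continuous J (F m)).tendsto f).comp hc
  have h2 : Tendsto (fun N : ℕ => indef J (∑ n ∈ Finset.range N, c n • F n) (F m)) atTop
      (nhds ((starRingEnd ℂ) (c m) * indef J (F m) (F m))) := by
    refine Tendsto.congr' ?_ tendsto_const_nhds
    filter_upwards [eventually_ge_atTop (m + 1)] with N hN
    rw [indef_pair J horth, if_pos (Finset.mem_range.mpr (by omega))]
  exact tendsto_nhds_unique h1 h2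

lemma form_tendsto (J : H →L[ℂ] H)
    (horth : ∀ n m : ℕ, n ≠ m → indef J (F n) (F m) = 0)
    {c : ℕ → ℂ} {f : H}
    (hc : Tendsto (fun N : ℕ => ∑ n ∈ Finset.range N, c n • F n) atTop (nhds f)) :
    Tendsto (fun N : ℕ => ∑ n ∈ Finset.range N, ‖c n‖ ^ 2 * (indef J (F n) (F n)).re) atTop
      (nhds ((indef J f f).re)) := by
  have hcont : Continuous fun g : H => (indef J g g).re :=
    Complex.continuous_re.comp (J.continuous.inner continuous_id)
  have h1 : Tendsto (fun N : ℕ =>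
      (indef J (∑ n ∈ Finset.range N, c n • F n) (∑ n ∈ Finset.range N, c n • F n)).re) atTop
      (nhds ((indef J f f).re)) := (hcont.tendsto f).comp hc
  refine Tendsto.congr (fun N => ?_) h1
  exact indef_diag_re J horth _ _

lemma tsum_span (J : H →L[ℂ] H)
    (horth : ∀ n m : ℕ, n ≠ m → indef J (F n) (F m) = 0)
    (s : Set ℕ) (l : ℕ →₀ ℂ) (hl : (l.support : Set ℕ) ⊆ s) :
    ∑' n : s, ‖indef J (∑ k ∈ l.support, l k • F k) (F ↑n)‖ ^ 2
      = ∑ n ∈ l.support, ‖l n‖ ^ 2 * ‖indef J (F n) (F n)‖ ^ 2 := by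
  set f := ∑ k ∈ l.support, l k • F k with hf
  rw [tsum_subtype s (fun n => ‖indef J f (F n)‖ ^ 2)]
  rw [tsum_eq_sum (s := l.support) ?h]
  case h =>
    intro b hb
    by_cases hbs : b ∈ s
    · rw [Set.indicator_of_mem hbs]
      rw [hf, indef_pair J horth, if_neg hb]
      simp
    · rw [Set.indicator_of_notMem hbs]
  refine Finset.sum_congr rfl fun n hn => ?_
  rw [Set.indicator_of_mem (hl hn)]
  rw [hf, indef_pair J horth, if_pos hn]
  rw [norm_mul, mul_pow, RCLike.norm_conj]

lemma coeff_zero_of_closure (J : H →L[ℂ] H) (hJ : IsFundSym J)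
    (horth : ∀ n m : ℕ, n ≠ m → indef J (F n) (F m) = 0)
    {s : Set ℕ} {f : H}
    (hf : f ∈ (Submodule.span ℂ (F '' s)).topologicalClosure) {m : ℕ} (hm : m ∉ s) :
    indef J f (F m) = 0 := by
  set ψ : H →L[ℂ] ℂ := innerSL ℂ (J (F m)) with hψ
  have hker : Submodule.span ℂ (F '' s) ≤ LinearMap.ker (ψ : H →ₗ[ℂ] ℂ) := by
    rw [Submodule.span_le]
    rintro x ⟨k, hk, rfl⟩
    have : ψ (F k) = 0 := horth m k (fun h => hm (h ▸ hk))
    simpa using this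
  have hclosed : IsClosed ((LinearMap.ker (ψ : H →ₗ[ℂ] ℂ) : Submodule ℂ H) : Set H) :=
    ContinuousLinearMap.isClosed_ker ψ
  have h2 := Submodule.topologicalClosure_minimal _ hker hclosed hf
  have h3 : ψ f = 0 := h2
  rw [indef_symm J hJ]
  have : indef J (F m) f = ψ f := rfl
  rw [this, h3, map_zero]

lemma span_rep {s : Set ℕ} {f : H} (hf : f ∈ Submodule.span ℂ (F '' s)) :
    ∃ l : ℕ →₀ ℂ, (l.support : Set ℕ) ⊆ s ∧ f = ∑ n ∈ l.support, l n • F n := by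
  obtain ⟨l, hls, hlf⟩ := (Finsupp.mem_span_image_iff_linearCombination ℂ).mp hf
  exact ⟨l, (Finsupp.mem_supported ℂ l).mp hls,
    by rw [← hlf, Finsupp.linearCombination_apply, Finsupp.sum]⟩

lemma indef_sub_expand (J : H →L[ℂ] H) (x y : H) :
    indef J (x - y) (x - y)
      = indef J x x - indef J x y - indef J y x + indef J y y := by
  simp only [indef, map_sub, inner_sub_left, inner_sub_right]
  ring

lemma wform (J : H →L[ℂ] H) (hJ : IsFundSym J)
    (horth : ∀ n m : ℕ, n ≠ m → indef J (F n) (F m) = 0)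
    {c : ℕ → ℂ} {v : H}
    (hc : Tendsto (fun N : ℕ => ∑ n ∈ Finset.range N, c n • F n) atTop (nhds v))
    (t : Finset ℕ) :
    (indef J (v - ∑ n ∈ t, c n • F n) (v - ∑ n ∈ t, c n • F n)).re
      = (indef J v v).re - ∑ n ∈ t, ‖c n‖ ^ 2 * (indef J (F n) (F n)).re := by
  set h := ∑ n ∈ t, c n • F n with hh
  set P : ℝ := ∑ n ∈ t, ‖c n‖ ^ 2 * (indef J (F n) (F n)).re with hP
  have h1 : indef J v h = (P : ℂ) := by
    rw [hh, indef_sum_right, hP, Complex.ofReal_sum]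
    refine Finset.sum_congr rfl fun n _ => ?_
    rw [coeff_eq J horth hc n, indef_real J hJ (F n)]
    calc c n * ((starRingEnd ℂ) (c n) * ((indef J (F n) (F n)).re : ℂ))
        = (c n * (starRingEnd ℂ) (c n)) * ((indef J (F n) (F n)).re : ℂ) := by ring
      _ = ((‖c n‖ : ℂ)) ^ 2 * ((indef J (F n) (F n)).re : ℂ) := by rw [Complex.mul_conj']
      _ = ((‖c n‖ ^ 2 * (indef J (F n) (F n)).re : ℝ) : ℂ) := by push_cast; ring
  have h2 : indef J h v = (P : ℂ) := by
    rw [indef_symm J hJ, h1, Complex.conj_ofReal]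
  have h3 : indef J h h = (P : ℂ) := by
    rw [hh, indef_diag J horth, hP, Complex.ofReal_sum]
    refine Finset.sum_congr rfl fun n _ => ?_
    rw [indef_real J hJ (F n)]
    push_cast [Complex.ofReal_re]; ring
  rw [indef_sub_expand, h1, h2, h3]
  simp

lemma wcoeff (J : H →L[ℂ] H)
    (horth : ∀ n m : ℕ, n ≠ m → indef J (F n) (F m) = 0)
    {c : ℕ → ℂ} {v : H}
    (hc : Tendsto (fun N : ℕ => ∑ n ∈ Finset.range N, c n • F n) atTop (nhds v))
    (t : Finset ℕ) {m : ℕ} (hm : m ∉ t) :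
    indef J (v - ∑ n ∈ t, c n • F n) (F m)
      = (starRingEnd ℂ) (c m) * indef J (F m) (F m) := by
  have hsub : indef J (v - ∑ n ∈ t, c n • F n) (F m)
      = indef J v (F m) - indef J (∑ n ∈ t, c n • F n) (F m) := by
    simp [indef, map_sub, inner_sub_left]
  rw [hsub, indef_pair J horth, if_neg hm, sub_zero, coeff_eq J horth hc m]

lemma F_ne_zero
    (hbasis : ∀ f : H, ∃! c : ℕ → ℂ,
      Tendsto (fun N : ℕ => ∑ n ∈ Finset.range N, c n • F n) atTop (nhds f))
    (n : ℕ) : F n ≠ 0 := by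
  intro h0
  obtain ⟨c, hc, hu⟩ := hbasis 0
  have h1 : (fun _ : ℕ => (0 : ℂ)) = c := by
    refine hu _ ?_
    simpa using (tendsto_const_nhds : Tendsto (fun _ : ℕ => (0 : H)) atTop (nhds 0))
  have h2 : (fun k : ℕ => if k = n then (1 : ℂ) else 0) = c := by
    refine hu _ ?_
    have heq : ∀ N : ℕ, ∑ k ∈ Finset.range N, (if k = n then (1 : ℂ) else 0) • F k = 0 := by
      intro N
      have hterm : ∀ k ∈ Finset.range N,
          (if k = n then (1 : ℂ) else 0) • F k = if k = n then F n else 0 := by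
        intro k _
        by_cases h : k = n
        · subst h; simp
        · simp [h]
      rw [Finset.sum_congr rfl hterm, Finset.sum_ite_eq' (Finset.range N) n (fun _ => F n)]
      simp [h0]
    refine Tendsto.congr (fun N => (heq N).symm) tendsto_const_nhds
  have := congrFun (h2.trans h1.symm) n
  simp at this

lemma sum_le_single_of_nonpos {s : Finset ℕ} {f : ℕ → ℝ} {m : ℕ} (hm : m ∈ s)
    (h : ∀ n ∈ s, f n ≤ 0) : ∑ n ∈ s, f n ≤ f m := by
  have h1 := Finset.single_le_sum (f := fun n => -f n) (fun n hn => neg_nonneg.mpr (h n hn)) hm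
  simp only [Finset.sum_neg_distrib] at h1
  linarith

lemma isPos_Mpos (J : H →L[ℂ] H) (hJ : IsFundSym J)
    (horth : ∀ n m : ℕ, n ≠ m → indef J (F n) (F m) = 0)
    (hbasis : ∀ f : H, ∃! c : ℕ → ℂ,
      Tendsto (fun N : ℕ => ∑ n ∈ Finset.range N, c n • F n) atTop (nhds f))
    {A : ℝ} (hA : 0 < A) (hb : ∀ n, A ≤ ‖indef J (F n) (F n)‖) :
    IsPos J (Mpos J F) := by
  refine ⟨Submodule.isClosed_topologicalClosure _, ?_⟩
  intro f hf hf0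
  obtain ⟨c, hc, -⟩ := hbasis f
  have hne : ∀ m, indef J (F m) (F m) ≠ 0 := by
    intro m h
    have := hb m
    rw [h, norm_zero] at this
    linarith
  have hneg0 : ∀ m, (indef J (F m) (F m)).re < 0 → c m = 0 := by
    intro m hm
    have h0 : indef J f (F m) = 0 :=
      coeff_zero_of_closure J hJ horth hf (by simpa [Npos] using not_le.mpr hm)
    have h1 := (coeff_eq J horth hc m).symm.trans h0
    rcases mul_eq_zero.mp h1 with h | h
    · simpa using h
    · exact absurd h (hne m)
  have hex : ∃ m, c m ≠ 0 := by
    by_contra h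
    push_neg at h
    refine hf0 (tendsto_nhds_unique hc ?_)
    have : ∀ N : ℕ, ∑ n ∈ Finset.range N, c n • F n = 0 := by
      intro N; simp [h]
    exact Tendsto.congr (fun N => (this N).symm) tendsto_const_nhds
  obtain ⟨m, hcm⟩ := hex
  have hm : 0 ≤ (indef J (F m) (F m)).re := by
    by_contra h
    exact hcm (hneg0 m (not_le.mp h))
  have hmA : A ≤ (indef J (F m) (F m)).re := by
    have := hb m
    rw [norm_indef_self hJ (F m), abs_of_nonneg hm] at this
    exact this
  have hterm : ∀ n, 0 ≤ ‖c n‖ ^ 2 * (indef J (F n) (F n)).re := by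
    intro n
    rcases le_or_gt 0 ((indef J (F n) (F n)).re) with h | h
    · positivity
    · rw [hneg0 n h]; simp
  have hcm2 : 0 < ‖c m‖ ^ 2 := pow_pos (norm_pos_iff.mpr hcm) 2
  have key : ∀ N ≥ m + 1,
      ‖c m‖ ^ 2 * A ≤ ∑ n ∈ Finset.range N, ‖c n‖ ^ 2 * (indef J (F n) (F n)).re := by
    intro N hN
    calc ‖c m‖ ^ 2 * A ≤ ‖c m‖ ^ 2 * (indef J (F m) (F m)).re := by nlinarith
      _ ≤ _ := Finset.single_le_sum (fun n _ => hterm n) (Finset.mem_range.mpr (by omega))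
  have hlim := form_tendsto J horth hc
  have hge : ‖c m‖ ^ 2 * A ≤ (indef J f f).re :=
    ge_of_tendsto hlim (eventually_atTop.mpr ⟨m + 1, key⟩)
  nlinarith

lemma isNeg_Mneg (J : H →L[ℂ] H) (hJ : IsFundSym J)
    (horth : ∀ n m : ℕ, n ≠ m → indef J (F n) (F m) = 0)
    (hbasis : ∀ f : H, ∃! c : ℕ → ℂ,
      Tendsto (fun N : ℕ => ∑ n ∈ Finset.range N, c n • F n) atTop (nhds f))
    {A : ℝ} (hA : 0 < A) (hb : ∀ n, A ≤ ‖indef J (F n) (F n)‖) :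
    IsNeg J (Mneg J F) := by
  refine ⟨Submodule.isClosed_topologicalClosure _, ?_⟩
  intro f hf hf0
  obtain ⟨c, hc, -⟩ := hbasis f
  have hne : ∀ m, indef J (F m) (F m) ≠ 0 := by
    intro m h
    have := hb m
    rw [h, norm_zero] at this
    linarith
  have hpos0 : ∀ m, 0 ≤ (indef J (F m) (F m)).re → c m = 0 := by
    intro m hm
    have h0 : indef J f (F m) = 0 :=
      coeff_zero_of_closure J hJ horth hf (by simpa [Nneg] using hm)
    have h1 := (coeff_eq J horth hc m).symm.trans h0
    rcases mul_eq_zero.mp h1 with h | h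
    · simpa using h
    · exact absurd h (hne m)
  have hex : ∃ m, c m ≠ 0 := by
    by_contra h
    push_neg at h
    refine hf0 (tendsto_nhds_unique hc ?_)
    have : ∀ N : ℕ, ∑ n ∈ Finset.range N, c n • F n = 0 := by
      intro N; simp [h]
    exact Tendsto.congr (fun N => (this N).symm) tendsto_const_nhds
  obtain ⟨m, hcm⟩ := hex
  have hm : (indef J (F m) (F m)).re < 0 := by
    by_contra h
    exact hcm (hpos0 m (not_lt.mp h))
  have hmA : (indef J (F m) (F m)).re ≤ -A := by
    have := hb m
    rw [norm_indef_self hJ (F m), abs_of_neg hm] at this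
    linarith
  have hterm : ∀ n, ‖c n‖ ^ 2 * (indef J (F n) (F n)).re ≤ 0 := by
    intro n
    rcases le_or_gt 0 ((indef J (F n) (F n)).re) with h | h
    · rw [hpos0 n h]; simp
    · nlinarith [sq_nonneg ‖c n‖]
  have hcm2 : 0 < ‖c m‖ ^ 2 := pow_pos (norm_pos_iff.mpr hcm) 2
  have key : ∀ N ≥ m + 1,
      ∑ n ∈ Finset.range N, ‖c n‖ ^ 2 * (indef J (F n) (F n)).re ≤ ‖c m‖ ^ 2 * (-A) := by
    intro N hN
    calc ∑ n ∈ Finset.range N, ‖c n‖ ^ 2 * (indef J (F n) (F n)).re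
        ≤ ‖c m‖ ^ 2 * (indef J (F m) (F m)).re :=
          sum_le_single_of_nonpos (Finset.mem_range.mpr (by omega)) (fun n _ => hterm n)
      _ ≤ ‖c m‖ ^ 2 * (-A) := by nlinarith
  have hlim := form_tendsto J horth hc
  have hge : (indef J f f).re ≤ ‖c m‖ ^ 2 * (-A) :=
    le_of_tendsto hlim (eventually_atTop.mpr ⟨m + 1, key⟩)
  nlinarith

lemma isMaxPos_Mpos (J : H →L[ℂ] H) (hJ : IsFundSym J)
    (horth : ∀ n m : ℕ, n ≠ m → indef J (F n) (F m) = 0)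
    (hbasis : ∀ f : H, ∃! c : ℕ → ℂ,
      Tendsto (fun N : ℕ => ∑ n ∈ Finset.range N, c n • F n) atTop (nhds f))
    {A : ℝ} (hA : 0 < A) (hb : ∀ n, A ≤ ‖indef J (F n) (F n)‖) :
    IsMaxPos J (Mpos J F) := by
  classical
  refine ⟨isPos_Mpos J hJ horth hbasis hA hb, ?_⟩
  intro M' hM' hle
  refine le_antisymm ?_ hle
  intro v hv
  obtain ⟨c, hc, -⟩ := hbasis v
  suffices hsupp : ∀ m, (indef J (F m) (F m)).re < 0 → c m = 0 by
    have hmem : ∀ N : ℕ,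
        (∑ n ∈ Finset.range N, c n • F n) ∈ Submodule.span ℂ (F '' Npos J F) := by
      intro N
      refine Submodule.sum_mem _ fun n _ => ?_
      rcases le_or_gt 0 ((indef J (F n) (F n)).re) with h | h
      · exact Submodule.smul_mem _ _ (Submodule.subset_span ⟨n, h, rfl⟩)
      · rw [hsupp n h, zero_smul]; exact Submodule.zero_mem _
    exact mem_closure_of_tendsto hc (Eventually.of_forall hmem)
  by_contra hcon
  push_neg at hcon
  obtain ⟨m, hm, hcm⟩ := hcon
  have hPlt : ∀ N : ℕ, (∑ n ∈ (Finset.range N).filter (fun n => 0 ≤ (indef J (F n) (F n)).re),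
      ‖c n‖ ^ 2 * (indef J (F n) (F n)).re) < (indef J v v).re := by
    intro N
    set t := (Finset.range N).filter (fun n => 0 ≤ (indef J (F n) (F n)).re) with ht
    have hhspan : (∑ n ∈ t, c n • F n) ∈ Submodule.span ℂ (F '' Npos J F) := by
      refine Submodule.sum_mem _ fun n hn => ?_
      exact Submodule.smul_mem _ _
        (Submodule.subset_span ⟨n, (Finset.mem_filter.mp hn).2, rfl⟩)
    have hw : v - ∑ n ∈ t, c n • F n ∈ M' :=
      Submodule.sub_mem _ hv (hle (Submodule.le_topologicalClosure _ hhspan))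
    have hmt : m ∉ t := by
      rw [ht, Finset.mem_filter]
      exact fun h => absurd h.2 (not_le.mpr hm)
    have hwne : v - ∑ n ∈ t, c n • F n ≠ 0 := by
      intro h0
      have h1 := wcoeff J horth hc t hmt
      rw [h0] at h1
      have h2 : indef J (0 : H) (F m) = 0 := by simp [indef]
      rw [h2] at h1
      have hne : indef J (F m) (F m) ≠ 0 := by
        intro h
        rw [h] at hm
        simp at hm
      rcases mul_eq_zero.mp h1.symm with h | h
      · exact hcm (by simpa using h)
      · exact hne h
    have hpos := hM'.2 _ hw hwne
    have hform := wform J hJ horth hc t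
    rw [hform] at hpos
    linarith
  have hR := form_tendsto J horth hc
  have hq0 : ‖c m‖ ^ 2 * (indef J (F m) (F m)).re < 0 :=
    mul_neg_of_pos_of_neg (pow_pos (norm_pos_iff.mpr hcm) 2) hm
  have hQle : ∀ K : ℕ, m < K →
      (∑ n ∈ (Finset.range K).filter (fun n => ¬ 0 ≤ (indef J (F n) (F n)).re),
        ‖c n‖ ^ 2 * (indef J (F n) (F n)).re) ≤ ‖c m‖ ^ 2 * (indef J (F m) (F m)).re := by
    intro K hK
    refine sum_le_single_of_nonpos
      (Finset.mem_filter.mpr ⟨Finset.mem_range.mpr hK, not_le.mpr hm⟩) ?_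
    intro n hn
    have h := not_le.mp (Finset.mem_filter.mp hn).2
    nlinarith [sq_nonneg ‖c n‖]
  have hev : ∀ᶠ K in atTop,
      (indef J v v).re + (‖c m‖ ^ 2 * (indef J (F m) (F m)).re) / 2
        < ∑ n ∈ Finset.range K, ‖c n‖ ^ 2 * (indef J (F n) (F n)).re :=
    hR.eventually (eventually_gt_nhds (by linarith))
  obtain ⟨K, hK1, hK2⟩ := ((eventually_gt_atTop m).and hev).exists
  have hsplit := Finset.sum_filter_add_sum_filter_not (Finset.range K)
    (fun n => 0 ≤ (indef J (F n) (F n)).re) (fun n => ‖c n‖ ^ 2 * (indef J (F n) (F n)).re)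
  have h1 := hPlt K
  have h2 := hQle K hK1
  linarith

lemma isMaxNeg_Mneg (J : H →L[ℂ] H) (hJ : IsFundSym J)
    (horth : ∀ n m : ℕ, n ≠ m → indef J (F n) (F m) = 0)
    (hbasis : ∀ f : H, ∃! c : ℕ → ℂ,
      Tendsto (fun N : ℕ => ∑ n ∈ Finset.range N, c n • F n) atTop (nhds f))
    {A : ℝ} (hA : 0 < A) (hb : ∀ n, A ≤ ‖indef J (F n) (F n)‖) :
    IsMaxNeg J (Mneg J F) := by
  classical
  refine ⟨isNeg_Mneg J hJ horth hbasis hA hb, ?_⟩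
  intro M' hM' hle
  refine le_antisymm ?_ hle
  intro v hv
  obtain ⟨c, hc, -⟩ := hbasis v
  suffices hsupp : ∀ m, 0 ≤ (indef J (F m) (F m)).re → c m = 0 by
    have hmem : ∀ N : ℕ,
        (∑ n ∈ Finset.range N, c n • F n) ∈ Submodule.span ℂ (F '' Nneg J F) := by
      intro N
      refine Submodule.sum_mem _ fun n _ => ?_
      rcases lt_or_ge ((indef J (F n) (F n)).re) 0 with h | h
      · exact Submodule.smul_mem _ _ (Submodule.subset_span ⟨n, h, rfl⟩)
      · rw [hsupp n h, zero_smul]; exact Submodule.zero_mem _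
    exact mem_closure_of_tendsto hc (Eventually.of_forall hmem)
  by_contra hcon
  push_neg at hcon
  obtain ⟨m, hm, hcm⟩ := hcon
  have hmA : A ≤ (indef J (F m) (F m)).re := by
    have := hb m
    rw [norm_indef_self hJ (F m), abs_of_nonneg hm] at this
    exact this
  have hPgt : ∀ N : ℕ, (indef J v v).re <
      (∑ n ∈ (Finset.range N).filter (fun n => (indef J (F n) (F n)).re < 0),
        ‖c n‖ ^ 2 * (indef J (F n) (F n)).re) := by
    intro N
    set t := (Finset.range N).filter (fun n => (indef J (F n) (F n)).re < 0) with ht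
    have hhspan : (∑ n ∈ t, c n • F n) ∈ Submodule.span ℂ (F '' Nneg J F) := by
      refine Submodule.sum_mem _ fun n hn => ?_
      exact Submodule.smul_mem _ _
        (Submodule.subset_span ⟨n, (Finset.mem_filter.mp hn).2, rfl⟩)
    have hw : v - ∑ n ∈ t, c n • F n ∈ M' :=
      Submodule.sub_mem _ hv (hle (Submodule.le_topologicalClosure _ hhspan))
    have hmt : m ∉ t := by
      rw [ht, Finset.mem_filter]
      exact fun h => absurd h.2 (not_lt.mpr hm)
    have hwne : v - ∑ n ∈ t, c n • F n ≠ 0 := by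
      intro h0
      have h1 := wcoeff J horth hc t hmt
      rw [h0] at h1
      have h2 : indef J (0 : H) (F m) = 0 := by simp [indef]
      rw [h2] at h1
      have hne : indef J (F m) (F m) ≠ 0 := by
        intro h
        have := hb m
        rw [h, norm_zero] at this
        linarith
      rcases mul_eq_zero.mp h1.symm with h | h
      · exact hcm (by simpa using h)
      · exact hne h
    have hneg := hM'.2 _ hw hwne
    have hform := wform J hJ horth hc t
    rw [hform] at hneg
    linarith
  have hR := form_tendsto J horth hc
  have hq0 : 0 < ‖c m‖ ^ 2 * (indef J (F m) (F m)).re :=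
    mul_pos (pow_pos (norm_pos_iff.mpr hcm) 2) (by linarith)
  have hQge : ∀ K : ℕ, m < K →
      ‖c m‖ ^ 2 * (indef J (F m) (F m)).re ≤
      (∑ n ∈ (Finset.range K).filter (fun n => ¬ (indef J (F n) (F n)).re < 0),
        ‖c n‖ ^ 2 * (indef J (F n) (F n)).re) := by
    intro K hK
    have hmm : m ∈ (Finset.range K).filter (fun n => ¬ (indef J (F n) (F n)).re < 0) :=
      Finset.mem_filter.mpr ⟨Finset.mem_range.mpr hK, not_lt.mpr hm⟩
    refine Finset.single_le_sum
      (f := fun n => ‖c n‖ ^ 2 * (indef J (F n) (F n)).re) (fun n hn => ?_) hmm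
    have h := not_lt.mp (Finset.mem_filter.mp hn).2
    positivity
  have hev : ∀ᶠ K in atTop,
      (∑ n ∈ Finset.range K, ‖c n‖ ^ 2 * (indef J (F n) (F n)).re)
        < (indef J v v).re + (‖c m‖ ^ 2 * (indef J (F m) (F m)).re) / 2 :=
    hR.eventually (eventually_lt_nhds (by linarith))
  obtain ⟨K, hK1, hK2⟩ := ((eventually_gt_atTop m).and hev).exists
  have hsplit := Finset.sum_filter_add_sum_filter_not (Finset.range K)
    (fun n => (indef J (F n) (F n)).re < 0) (fun n => ‖c n‖ ^ 2 * (indef J (F n) (F n)).re)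
  have h1 := hPgt K
  have h2 := hQge K hK1
  linarith

lemma span_ineq_pos (J : H →L[ℂ] H) (hJ : IsFundSym J)
    (horth : ∀ n m : ℕ, n ≠ m → indef J (F n) (F m) = 0)
    {A B : ℝ} (hA : 0 < A)
    (hb : ∀ n : ℕ, A ≤ ‖indef J (F n) (F n)‖ ∧ ‖indef J (F n) (F n)‖ ≤ B) :
    ∀ f ∈ Submodule.span ℂ (F '' Npos J F),
      A * |(indef J f f).re| ≤ ∑' n : Npos J F, ‖indef J f (F ↑n)‖ ^ 2 ∧
      ∑' n : Npos J F, ‖indef J f (F ↑n)‖ ^ 2 ≤ B * |(indef J f f).re| := by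
  intro f hf
  obtain ⟨l, hls, rfl⟩ := span_rep hf
  have hper : ∀ n ∈ l.support,
      0 ≤ (indef J (F n) (F n)).re ∧ A ≤ (indef J (F n) (F n)).re ∧
        (indef J (F n) (F n)).re ≤ B := by
    intro n hn
    have h0 : 0 ≤ (indef J (F n) (F n)).re := hls hn
    have h1 := (hb n).1
    have h2 := (hb n).2
    rw [norm_indef_self hJ (F n), abs_of_nonneg h0] at h1 h2
    exact ⟨h0, h1, h2⟩
  have hT := tsum_span J horth (Npos J F) l hls
  have hR := indef_diag_re J horth l.support (fun n => l n)
  have hRnn : 0 ≤ ∑ n ∈ l.support, ‖l n‖ ^ 2 * (indef J (F n) (F n)).re := by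
    refine Finset.sum_nonneg fun n hn => ?_
    have := (hper n hn).1
    positivity
  have habs : |(indef J (∑ n ∈ l.support, l n • F n) (∑ n ∈ l.support, l n • F n)).re|
      = ∑ n ∈ l.support, ‖l n‖ ^ 2 * (indef J (F n) (F n)).re := by
    rw [hR]; exact abs_of_nonneg hRnn
  have hnorm : ∀ n ∈ l.support, ‖indef J (F n) (F n)‖ = (indef J (F n) (F n)).re := by
    intro n hn
    rw [norm_indef_self hJ (F n), abs_of_nonneg (hper n hn).1]
  constructor
  · rw [hT, habs, Finset.mul_sum]
    refine Finset.sum_le_sum fun n hn => ?_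
    obtain ⟨h0, h1, h2⟩ := hper n hn
    rw [hnorm n hn]
    nlinarith [mul_nonneg (mul_nonneg (sq_nonneg ‖l n‖) h0) (sub_nonneg.mpr h1)]
  · rw [hT, habs, Finset.mul_sum]
    refine Finset.sum_le_sum fun n hn => ?_
    obtain ⟨h0, h1, h2⟩ := hper n hn
    rw [hnorm n hn]
    nlinarith [mul_nonneg (mul_nonneg (sq_nonneg ‖l n‖) h0) (sub_nonneg.mpr h2)]

lemma span_ineq_neg (J : H →L[ℂ] H) (hJ : IsFundSym J)
    (horth : ∀ n m : ℕ, n ≠ m → indef J (F n) (F m) = 0)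
    {A B : ℝ} (hA : 0 < A)
    (hb : ∀ n : ℕ, A ≤ ‖indef J (F n) (F n)‖ ∧ ‖indef J (F n) (F n)‖ ≤ B) :
    ∀ f ∈ Submodule.span ℂ (F '' Nneg J F),
      A * |(indef J f f).re| ≤ ∑' n : Nneg J F, ‖indef J f (F ↑n)‖ ^ 2 ∧
      ∑' n : Nneg J F, ‖indef J f (F ↑n)‖ ^ 2 ≤ B * |(indef J f f).re| := by
  intro f hf
  obtain ⟨l, hls, rfl⟩ := span_rep hf
  have hper : ∀ n ∈ l.support,
      (indef J (F n) (F n)).re < 0 ∧ A ≤ -(indef J (F n) (F n)).re ∧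
        -(indef J (F n) (F n)).re ≤ B := by
    intro n hn
    have h0 : (indef J (F n) (F n)).re < 0 := hls hn
    have h1 := (hb n).1
    have h2 := (hb n).2
    rw [norm_indef_self hJ (F n), abs_of_neg h0] at h1 h2
    exact ⟨h0, h1, h2⟩
  have hT := tsum_span J horth (Nneg J F) l hls
  have hR := indef_diag_re J horth l.support (fun n => l n)
  have hRnp : ∑ n ∈ l.support, ‖l n‖ ^ 2 * (indef J (F n) (F n)).re ≤ 0 := by
    refine Finset.sum_nonpos fun n hn => ?_
    have := (hper n hn).1
    nlinarith [sq_nonneg ‖l n‖]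
  have habs : |(indef J (∑ n ∈ l.support, l n • F n) (∑ n ∈ l.support, l n • F n)).re|
      = ∑ n ∈ l.support, ‖l n‖ ^ 2 * (-(indef J (F n) (F n)).re) := by
    rw [hR, abs_of_nonpos hRnp, ← Finset.sum_neg_distrib]
    exact Finset.sum_congr rfl fun n _ => by ring
  have hnorm : ∀ n ∈ l.support, ‖indef J (F n) (F n)‖ = -(indef J (F n) (F n)).re := by
    intro n hn
    rw [norm_indef_self hJ (F n), abs_of_neg (hper n hn).1]
  constructor
  · rw [hT, habs, Finset.mul_sum]
    refine Finset.sum_le_sum fun n hn => ?_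
    obtain ⟨h0, h1, h2⟩ := hper n hn
    rw [hnorm n hn]
    nlinarith [mul_nonneg (mul_nonneg (sq_nonneg ‖l n‖) (by linarith : (0:ℝ) ≤ -(indef J (F n) (F n)).re)) (sub_nonneg.mpr h1)]
  · rw [hT, habs, Finset.mul_sum]
    refine Finset.sum_le_sum fun n hn => ?_
    obtain ⟨h0, h1, h2⟩ := hper n hn
    rw [hnorm n hn]
    nlinarith [mul_nonneg (mul_nonneg (sq_nonneg ‖l n‖) (by linarith : (0:ℝ) ≤ -(indef J (F n) (F n)).re)) (sub_nonneg.mpr h2)]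

end Aux


/-- Corollary: a `J`-orthogonal Schauder basis of `(H, (·,·))`
is a `J`-frame iff it is `J`-bounded: `0 < A ≤ |[fₙ,fₙ]| ≤ B < ∞`. -/
theorem stmt15 (J : H →L[ℂ] H) (hJ : IsFundSym J)
    (F : ℕ → H)
    (horth : ∀ n m : ℕ, n ≠ m → indef J (F n) (F m) = 0)
    (hbasis : ∀ f : H, ∃! c : ℕ → ℂ,
      Tendsto (fun N : ℕ => ∑ n ∈ Finset.range N, c n • F n) atTop (nhds f)) :
    (∃ A B : ℝ, IsJFrame J F A B) ↔
    (∃ A B : ℝ, 0 < A ∧ A ≤ B ∧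
      ∀ n : ℕ, A ≤ ‖indef J (F n) (F n)‖ ∧ ‖indef J (F n) (F n)‖ ≤ B) := by
  classical
  constructor
  · rintro ⟨A, B, hA, hAB, hmp, hmn, hip, hin⟩
    refine ⟨A, B, hA, hAB, fun n => ?_⟩
    rcases le_or_gt 0 ((indef J (F n) (F n)).re) with hn | hn
    · have hmem : F n ∈ Submodule.span ℂ (F '' Npos J F) :=
        Submodule.subset_span ⟨n, hn, rfl⟩
      have h2 := hip (F n) hmem
      have hsupp : (Finsupp.single n (1 : ℂ)).support = {n} :=
        Finsupp.support_single_ne_zero n one_ne_zero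
      have hsum : ∑ k ∈ (Finsupp.single n (1 : ℂ)).support,
          (Finsupp.single n (1 : ℂ)) k • F k = F n := by
        rw [hsupp]; simp
      have hT := tsum_span J horth (Npos J F) (Finsupp.single n 1)
        (by rw [hsupp]; simpa [Npos] using hn)
      rw [hsum, hsupp] at hT
      simp only [Finset.sum_singleton, Finsupp.single_eq_same, norm_one, one_pow,
        one_mul] at hT
      rw [hT, ← norm_indef_self hJ (F n)] at h2
      have hFpos : F n ∈ Mpos J F := Submodule.le_topologicalClosure _ hmem
      have h0 : 0 < (indef J (F n) (F n)).re := hmp.1.2 (F n) hFpos (F_ne_zero hbasis n)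
      have hr : 0 < ‖indef J (F n) (F n)‖ := by
        rw [norm_indef_self hJ (F n)]
        exact abs_pos.mpr (ne_of_gt h0)
      constructor
      · nlinarith [h2.1]
      · nlinarith [h2.2]
    · have hmem : F n ∈ Submodule.span ℂ (F '' Nneg J F) :=
        Submodule.subset_span ⟨n, hn, rfl⟩
      have h2 := hin (F n) hmem
      have hsupp : (Finsupp.single n (1 : ℂ)).support = {n} :=
        Finsupp.support_single_ne_zero n one_ne_zero
      have hsum : ∑ k ∈ (Finsupp.single n (1 : ℂ)).support,
          (Finsupp.single n (1 : ℂ)) k • F k = F n := by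
        rw [hsupp]; simp
      have hT := tsum_span J horth (Nneg J F) (Finsupp.single n 1)
        (by rw [hsupp]; simpa [Nneg] using hn)
      rw [hsum, hsupp] at hT
      simp only [Finset.sum_singleton, Finsupp.single_eq_same, norm_one, one_pow,
        one_mul] at hT
      rw [hT, ← norm_indef_self hJ (F n)] at h2
      have hr : 0 < ‖indef J (F n) (F n)‖ := by
        rw [norm_indef_self hJ (F n)]
        exact abs_pos.mpr (ne_of_lt hn)
      constructor
      · nlinarith [h2.1]
      · nlinarith [h2.2]
  · rintro ⟨A, B, hA, hAB, hb⟩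
    have hb1 : ∀ n, A ≤ ‖indef J (F n) (F n)‖ := fun n => (hb n).1
    exact ⟨A, B, hA, hAB, isMaxPos_Mpos J hJ horth hbasis hA hb1,
      isMaxNeg_Mneg J hJ horth hbasis hA hb1,
      span_ineq_pos J hJ horth hA hb, span_ineq_neg J hJ horth hA hb⟩
end KreinStmt
end
end

section
/- Let H = L²(−a, a), J f(x) = f(−x), and [f,g] = ∫_{−a}^a f(−x) conj(g(x)) dx. Let Q be multiplication by x, and let {g_n} = {g_n⁺} ∪ {g_n⁻} where {g_n⁺} and {g_n⁻} are orthogonal bounded bases of the subspaces of even and odd functions, respectively. Then the sequence f_n(x) = e^{−x/2} g_n(x) is a J-orthogonal J-frame in the Krein space (L²(−a,a), [·,·]), with [f_n, f_m] = sgn[g_n,g_n] · ‖g_n‖² · δ_{nm}. -/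
noncomputable section
open Filter Topology

namespace KreinStmt

local notation "⟪" x ", " y "⟫" => @inner ℂ _ _ x y

variable {H : Type} [NormedAddCommGroup H] [InnerProductSpace ℂ H] [CompleteSpace H]

/-! ### Auxiliary material -/

section AuxHilbert

lemma inner_self_c {E : Type} [NormedAddCommGroup E] [InnerProductSpace ℂ E] (x : E) :
    ⟪x, x⟫ = ((‖x‖ ^ 2 : ℝ) : ℂ) := by
  exact_mod_cast inner_self_eq_norm_sq_to_K x

lemma frame_core {E : Type} [NormedAddCommGroup E] [InnerProductSpace ℂ E]
    (G : ℕ → E) (S : Set ℕ)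
    (horth : ∀ n m : ℕ, n ≠ m → ⟪G n, G m⟫ = 0)
    (c d : ℝ) (hc : 0 < c) (hbdd : ∀ n, c ≤ ‖G n‖ ∧ ‖G n‖ ≤ d)
    (g : E) (hg : g ∈ Submodule.span ℂ (G '' S)) :
    c ^ 2 * ‖g‖ ^ 2 ≤ ∑' n : S, ‖⟪g, G ↑n⟫‖ ^ 2 ∧
      ∑' n : S, ‖⟪g, G ↑n⟫‖ ^ 2 ≤ d ^ 2 * ‖g‖ ^ 2 := by
  classical
  obtain ⟨l, hls, rfl⟩ := (Finsupp.mem_span_image_iff_linearCombination ℂ).mp hg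
  set g := Finsupp.linearCombination ℂ G l with hgdef
  have hIP : ∀ m : ℕ, ⟪g, G m⟫ = (starRingEnd ℂ) (l m) * ((‖G m‖ ^ 2 : ℝ) : ℂ) := by
    intro m
    rw [hgdef, Finsupp.linearCombination_apply, Finsupp.sum, sum_inner]
    have : ∀ n ∈ l.support, n ≠ m → ⟪l n • G n, G m⟫ = 0 := by
      intro n _ hnm
      rw [inner_smul_left, horth n m hnm, mul_zero]
    rw [Finset.sum_eq_single m this (fun hm => by
      rw [Finsupp.notMem_support_iff.mp hm, zero_smul, inner_zero_left])]
    by_cases hm : m ∈ l.support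
    · rw [inner_smul_left, inner_self_c]
    · rw [Finsupp.notMem_support_iff.mp hm, zero_smul, inner_zero_left, map_zero, zero_mul]
  have hNG : ((‖g‖ ^ 2 : ℝ) : ℂ) = ∑ n ∈ l.support, ((‖l n‖ ^ 2 * ‖G n‖ ^ 2 : ℝ) : ℂ) := by
    rw [← inner_self_c]
    nth_rewrite 2 [hgdef]
    rw [Finsupp.linearCombination_apply, Finsupp.sum, inner_sum]
    apply Finset.sum_congr rfl
    intro n _
    rw [inner_smul_right, hIP n, ← mul_assoc, Complex.mul_conj']
    push_cast
    ring
  have hNormSq : ‖g‖ ^ 2 = ∑ n ∈ l.support, ‖l n‖ ^ 2 * ‖G n‖ ^ 2 := by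
    rw [show (∑ n ∈ l.support, ((‖l n‖ ^ 2 * ‖G n‖ ^ 2 : ℝ) : ℂ)) =
      ((∑ n ∈ l.support, ‖l n‖ ^ 2 * ‖G n‖ ^ 2 : ℝ) : ℂ) by push_cast; ring] at hNG
    exact_mod_cast hNG
  have hlsS : ∀ n ∈ l.support, n ∈ S := fun n hn => hls hn
  have htsum : ∑' n : S, ‖⟪g, G ↑n⟫‖ ^ 2 = ∑ n ∈ l.support, ‖l n‖ ^ 2 * ‖G n‖ ^ 4 := by
    have hzero : ∀ b : S, b ∉ Finset.subtype (· ∈ S) l.support → ‖⟪g, G ↑b⟫‖ ^ 2 = 0 := by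
      intro b hb
      have : (b : ℕ) ∉ l.support := fun h => hb (Finset.mem_subtype.mpr h)
      rw [hIP, Finsupp.notMem_support_iff.mp this, map_zero, zero_mul, norm_zero,
        zero_pow two_ne_zero]
    have hsub := Finset.sum_subtype_of_mem (p := (· ∈ S)) (fun n => ‖⟪g, G n⟫‖ ^ 2) hlsS
    rw [tsum_eq_sum hzero, hsub]
    apply Finset.sum_congr rfl
    intro n _
    show ‖⟪g, G n⟫‖ ^ 2 = ‖l n‖ ^ 2 * ‖G n‖ ^ 4
    rw [hIP, norm_mul, RCLike.norm_conj, mul_pow, Complex.norm_real,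
      Real.norm_eq_abs, abs_of_nonneg (sq_nonneg _)]
    ring
  constructor
  · rw [htsum, hNormSq, Finset.mul_sum]
    apply Finset.sum_le_sum
    intro n _
    have h1 : c ^ 2 ≤ ‖G n‖ ^ 2 := pow_le_pow_left₀ hc.le (hbdd n).1 2
    nlinarith [mul_le_mul_of_nonneg_left h1 (mul_nonneg (sq_nonneg (‖l n‖)) (sq_nonneg (‖G n‖)))]
  · rw [htsum, hNormSq, Finset.mul_sum]
    apply Finset.sum_le_sum
    intro n _
    have h1 : ‖G n‖ ^ 2 ≤ d ^ 2 := pow_le_pow_left₀ (norm_nonneg _) (hbdd n).2 2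
    nlinarith [mul_le_mul_of_nonneg_left h1 (mul_nonneg (sq_nonneg (‖l n‖)) (sq_nonneg (‖G n‖)))]

end AuxHilbert

section AuxLp
open MeasureTheory

abbrev μIoo (a : ℝ) : Measure ℝ := (volume : Measure ℝ).restrict (Set.Ioo (-a) a)

lemma negMP (a : ℝ) : MeasurePreserving (fun x:ℝ => -x) (μIoo a) (μIoo a) := by
  have := (Measure.measurePreserving_neg (volume : Measure ℝ)).restrict_preimage
    (measurableSet_Ioo (a := -a) (b := a))
  have hs : (fun x:ℝ => -x) ⁻¹' Set.Ioo (-a) a = Set.Ioo (-a) a := by ext x; simp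
  simpa [hs] using this

lemma ae_comp_neg {a : ℝ} {f g : ℝ → ℂ} (h : f =ᵐ[μIoo a] g) :
    (fun x => f (-x)) =ᵐ[μIoo a] (fun x => g (-x)) :=
  (negMP a).quasiMeasurePreserving.ae_eq_comp h

variable {a : ℝ} (Em : Lp ℂ 2 (μIoo a) →L[ℂ] Lp ℂ 2 (μIoo a))
  (hEm : ∀ f : Lp ℂ 2 (μIoo a),
    (Em f : ℝ → ℂ) =ᵐ[μIoo a] fun x => (Real.exp (-x / 2) : ℂ) * f x)
include hEm

lemma Em_symm (u v : Lp ℂ 2 (μIoo a)) : ⟪Em u, v⟫ = ⟪u, Em v⟫ := by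
  rw [MeasureTheory.L2.inner_def, MeasureTheory.L2.inner_def]
  apply integral_congr_ae
  filter_upwards [hEm u, hEm v] with x h1 h2
  simp only [h1, h2, RCLike.inner_apply, map_mul, Complex.conj_ofReal]
  ring

omit hEm in
lemma EpFun_mem (h : Lp ℂ 2 (μIoo a)) :
    MemLp (fun x => (Real.exp (x / 2) : ℂ) * h x) 2 (μIoo a) := by
  apply MemLp.of_le_mul (c := Real.exp (a / 2)) (Lp.memLp h)
  · exact ((Complex.continuous_ofReal.comp
      (Real.continuous_exp.comp (continuous_id.div_const 2))).aestronglyMeasurable).mul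
      (Lp.aestronglyMeasurable h)
  · filter_upwards [ae_restrict_mem (measurableSet_Ioo (a := -a) (b := a))] with x hx
    rw [norm_mul, Complex.norm_real, Real.norm_eq_abs, Real.abs_exp]
    exact mul_le_mul_of_nonneg_right (Real.exp_le_exp.2 (by linarith [hx.2])) (norm_nonneg _)

def Ep (h : Lp ℂ 2 (μIoo a)) : Lp ℂ 2 (μIoo a) := (EpFun_mem h).toLp _

omit hEm in
lemma Ep_coe (h : Lp ℂ 2 (μIoo a)) :
    (Ep h : ℝ → ℂ) =ᵐ[μIoo a] fun x => (Real.exp (x / 2) : ℂ) * h x :=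
  MemLp.coeFn_toLp _

lemma Em_Ep (h : Lp ℂ 2 (μIoo a)) : Em (Ep h) = h := by
  apply Lp.ext
  filter_upwards [hEm (Ep h), Ep_coe h] with x h1 h3
  rw [h1, h3, ← mul_assoc, ← Complex.ofReal_mul, ← Real.exp_add,
    show -x / 2 + x / 2 = 0 by ring, Real.exp_zero, Complex.ofReal_one, one_mul]

lemma Ep_Em (h : Lp ℂ 2 (μIoo a)) : Ep (Em h) = h := by
  apply Lp.ext
  filter_upwards [Ep_coe (Em h), hEm h] with x h1 h2
  rw [h1, h2, ← mul_assoc, ← Complex.ofReal_mul, ← Real.exp_add,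
    show x / 2 + -x / 2 = 0 by ring, Real.exp_zero, Complex.ofReal_one, one_mul]

lemma Em_bij : Function.Bijective Em := by
  constructor
  · intro u v huv
    have := Ep_Em Em hEm u
    rw [huv, Ep_Em Em hEm] at this
    exact this.symm
  · intro h
    exact ⟨Ep h, Em_Ep Em hEm h⟩

def EmEquiv : Lp ℂ 2 (μIoo a) ≃L[ℂ] Lp ℂ 2 (μIoo a) :=
  ContinuousLinearEquiv.ofBijective Em
    (LinearMap.ker_eq_bot'.mpr (fun u hu => by
      have h0 : Em u = Em 0 := by simpa using hu
      exact (Em_bij Em hEm).1 h0))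
    (LinearMap.range_eq_top.mpr (Em_bij Em hEm).2)

lemma EmEquiv_coe : ⇑(EmEquiv Em hEm) = ⇑Em := rfl

lemma Em_image_closure (s : Set (Lp ℂ 2 (μIoo a))) :
    ⇑Em '' closure s = closure (⇑Em '' s) := by
  have := (EmEquiv Em hEm).toHomeomorph.image_closure s
  simpa [ContinuousLinearEquiv.coe_toHomeomorph, EmEquiv_coe Em hEm] using this

lemma Em_image_isClosed {s : Set (Lp ℂ 2 (μIoo a))} (hs : IsClosed s) :
    IsClosed (⇑Em '' s) := by
  have : IsClosed (⇑(EmEquiv Em hEm).toHomeomorph '' s) :=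
    (Homeomorph.isClosed_image _).mpr hs
  simpa [ContinuousLinearEquiv.coe_toHomeomorph, EmEquiv_coe Em hEm] using this

end AuxLp


set_option maxHeartbeats 1000000 in
open MeasureTheory in
/-- Example: in `H = L²(-a,a)` with `J f(x) = f(-x)` and
`[f,g] = ∫ f(-x) conj(g(x)) dx`, if `{gₙ}` is an orthogonal bounded basis of
`H` consisting of even and odd functions (`J gₙ = ±gₙ`), then
`fₙ(x) = e^{-x/2} gₙ(x)` is a `J`-orthogonal `J`-frame with
`[fₙ,fₘ] = sgn[gₙ,gₙ]·‖gₙ‖²·δₙₘ`. -/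
theorem stmt19 (a : ℝ) (ha : 0 < a)
    (Jr : Lp ℂ 2 (volume.restrict (Set.Ioo (-a) a)) →L[ℂ]
          Lp ℂ 2 (volume.restrict (Set.Ioo (-a) a)))
    (hJr : ∀ f : Lp ℂ 2 (volume.restrict (Set.Ioo (-a) a)),
      (Jr f : ℝ → ℂ) =ᵐ[volume.restrict (Set.Ioo (-a) a)] fun x => f (-x))
    (hJfs : IsFundSym Jr)
    (Em : Lp ℂ 2 (volume.restrict (Set.Ioo (-a) a)) →L[ℂ]
          Lp ℂ 2 (volume.restrict (Set.Ioo (-a) a)))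
    (hEm : ∀ f : Lp ℂ 2 (volume.restrict (Set.Ioo (-a) a)),
      (Em f : ℝ → ℂ) =ᵐ[volume.restrict (Set.Ioo (-a) a)]
        fun x => (Real.exp (-x / 2) : ℂ) * f x)
    (G : ℕ → Lp ℂ 2 (volume.restrict (Set.Ioo (-a) a)))
    (hGparity : ∀ n : ℕ, Jr (G n) = G n ∨ Jr (G n) = -(G n))
    (hGorth : ∀ n m : ℕ, n ≠ m → ⟪G n, G m⟫ = 0)
    (c d : ℝ) (hc : 0 < c)
    (hGbdd : ∀ n : ℕ, c ≤ ‖G n‖ ∧ ‖G n‖ ≤ d)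
    (hGcomplete : Dense (↑(Submodule.span ℂ (Set.range G)) :
      Set (Lp ℂ 2 (volume.restrict (Set.Ioo (-a) a))))) :
    (∀ n m : ℕ, n ≠ m → indef Jr (Em (G n)) (Em (G m)) = 0) ∧
    (∀ n : ℕ, indef Jr (Em (G n)) (Em (G n)) =
      (((indef Jr (G n) (G n)).re.sign * ‖G n‖ ^ 2 : ℝ) : ℂ)) ∧
    ∃ A B : ℝ, IsJFrame Jr (fun n : ℕ => Em (G n)) A B := by
  classical
  have hsym := hJfs.1
  have hinv := hJfs.2
  set F : ℕ → Lp ℂ 2 (μIoo a) := fun n => Em (G n) with hF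
  -- Em (Jr (Em f)) = Jr f
  have hEJE : ∀ f, Em (Jr (Em f)) = Jr f := by
    intro f
    apply MeasureTheory.Lp.ext
    have h3 : (fun x => (Em f : ℝ → ℂ) (-x)) =ᵐ[μIoo a]
        (fun x => (Real.exp (x / 2) : ℂ) * f (-x)) :=
      (ae_comp_neg (hEm f)).trans (Filter.Eventually.of_forall fun x => by simp)
    filter_upwards [hEm (Jr (Em f)), hJr (Em f), h3, hJr f] with x e1 e2 e3 e4
    rw [e1, e2, e3, e4, ← mul_assoc, ← Complex.ofReal_mul, ← Real.exp_add,
      show -x / 2 + x / 2 = 0 by ring, Real.exp_zero, Complex.ofReal_one, one_mul]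
  -- the key identity
  have key : ∀ u v, indef Jr (Em u) (Em v) = indef Jr u v := by
    intro u v
    show ⟪Jr (Em u), Em v⟫ = ⟪Jr u, v⟫
    rw [← Em_symm Em hEm (Jr (Em u)) v, hEJE u]
  have hGne : ∀ n, G n ≠ 0 := by
    intro n h
    have := (hGbdd n).1
    rw [h, norm_zero] at this
    linarith
  have hGn2 : ∀ n, 0 < ‖G n‖ ^ 2 := fun n => pow_pos (norm_pos_iff.mpr (hGne n)) 2
  have hnotboth : ∀ n, Jr (G n) = G n → Jr (G n) = -G n → False := by
    intro n h1 h2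
    rw [h1] at h2
    apply hGne n
    have := congrArg (fun z => (2:ℂ)⁻¹ • (z + G n)) h2
    simpa [← two_smul ℂ, smul_smul] using this
  have indefG : ∀ n, indef Jr (G n) (G n) =
      (if Jr (G n) = G n then ((‖G n‖ ^ 2 : ℝ) : ℂ) else -((‖G n‖ ^ 2 : ℝ) : ℂ)) := by
    intro n
    rcases hGparity n with h | h
    · rw [if_pos h]; show ⟪Jr (G n), G n⟫ = _; rw [h, inner_self_c]
    · rw [if_neg (fun h' => hnotboth n h' h)]
      show ⟪Jr (G n), G n⟫ = _
      rw [h, inner_neg_left, inner_self_c]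
  -- the even / odd index sets
  have hNpos : Npos Jr F = {n | Jr (G n) = G n} := by
    ext n
    simp only [Npos, Set.mem_setOf_eq, hF, key, indefG n]
    rcases hGparity n with h | h
    · simp only [if_pos h, Complex.ofReal_re]
      exact ⟨fun _ => h, fun _ => (hGn2 n).le⟩
    · rw [if_neg (fun h' => hnotboth n h' h)]
      simp only [Complex.neg_re, Complex.ofReal_re]
      constructor
      · intro h'; exfalso; have := hGn2 n; linarith
      · intro h'; exact absurd h' (fun h' => hnotboth n h' h)
  have hNneg : Nneg Jr F = {n | Jr (G n) = -G n} := by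
    ext n
    simp only [Nneg, Set.mem_setOf_eq, hF, key, indefG n]
    rcases hGparity n with h | h
    · simp only [if_pos h, Complex.ofReal_re]
      constructor
      · intro h'; exfalso; have := hGn2 n; linarith
      · intro h'; exact absurd h (fun _ => hnotboth n h h')
    · rw [if_neg (fun h' => hnotboth n h' h)]
      simp only [Complex.neg_re, Complex.ofReal_re]
      exact ⟨fun _ => h, fun _ => by have := hGn2 n; linarith⟩
  refine ⟨?_, ?_, ?_⟩
  · -- J-orthogonality
    intro n m hnm
    rw [key]
    show ⟪Jr (G n), G m⟫ = 0
    rcases hGparity n with h | h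
    · rw [h, hGorth n m hnm]
    · rw [h, inner_neg_left, hGorth n m hnm, neg_zero]
  · -- diagonal values
    intro n
    rw [key, indefG n]
    rcases hGparity n with h | h
    · rw [if_pos h, Complex.ofReal_re, Real.sign_of_pos (hGn2 n), one_mul]
    · rw [if_neg (fun h' => hnotboth n h' h), Complex.neg_re, Complex.ofReal_re,
        Real.sign_of_neg (by have := hGn2 n; linarith), neg_one_mul, Complex.ofReal_neg]
  -- the J-frame property
  set Ev : Set ℕ := {n | Jr (G n) = G n} with hEv
  set Od : Set ℕ := {n | Jr (G n) = -G n} with hOd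
  set Hp : Submodule ℂ (Lp ℂ 2 (μIoo a)) :=
    { carrier := {u | Jr u = u}
      add_mem' := by
        intro u v hu hv
        simp only [Set.mem_setOf_eq] at *
        rw [map_add, hu, hv]
      zero_mem' := by simp only [Set.mem_setOf_eq, map_zero]
      smul_mem' := by
        intro r u hu
        simp only [Set.mem_setOf_eq] at *
        rw [_root_.map_smul, hu] } with hHp
  set Hm : Submodule ℂ (Lp ℂ 2 (μIoo a)) :=
    { carrier := {u | Jr u = -u}
      add_mem' := by
        intro u v hu hv
        simp only [Set.mem_setOf_eq] at *
        rw [map_add, hu, hv, neg_add]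
      zero_mem' := by simp only [Set.mem_setOf_eq, map_zero, neg_zero]
      smul_mem' := by
        intro r u hu
        simp only [Set.mem_setOf_eq] at *
        rw [_root_.map_smul, hu, smul_neg] } with hHm
  have hmemHp : ∀ u, u ∈ Hp ↔ Jr u = u := fun u => Iff.rfl
  have hmemHm : ∀ u, u ∈ Hm ↔ Jr u = -u := fun u => Iff.rfl
  have hHpc : IsClosed (Hp : Set (Lp ℂ 2 (μIoo a))) :=
    isClosed_eq Jr.continuous continuous_id
  have hHmc : IsClosed (Hm : Set (Lp ℂ 2 (μIoo a))) :=
    isClosed_eq Jr.continuous continuous_neg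
  have hspanEv : Submodule.span ℂ (G '' Ev) ≤ Hp := by
    rw [Submodule.span_le]
    rintro _ ⟨n, hn, rfl⟩
    exact hn
  have hspanOd : Submodule.span ℂ (G '' Od) ≤ Hm := by
    rw [Submodule.span_le]
    rintro _ ⟨n, hn, rfl⟩
    exact hn
  have half : ∀ u : Lp ℂ 2 (μIoo a), (2:ℂ)⁻¹ • (u + u) = u := by
    intro u
    rw [← two_smul ℂ, smul_smul, inv_mul_cancel₀ (two_ne_zero : (2:ℂ) ≠ 0), one_smul]
  -- density of the spans in Hp, Hm
  have hdensEv : (Hp : Set (Lp ℂ 2 (μIoo a))) ⊆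
      closure (Submodule.span ℂ (G '' Ev) : Set (Lp ℂ 2 (μIoo a))) := by
    intro g hg
    have hJg : Jr g = g := hg
    set P : Lp ℂ 2 (μIoo a) →L[ℂ] Lp ℂ 2 (μIoo a) :=
      (2:ℂ)⁻¹ • (ContinuousLinearMap.id ℂ _ + Jr) with hPdef
    have hPapp : ∀ u, P u = (2:ℂ)⁻¹ • (u + Jr u) := fun u => by
      simp [hPdef, ContinuousLinearMap.smul_apply, ContinuousLinearMap.add_apply]
    have hPg : P g = g := by rw [hPapp, hJg, half]
    have hmaps : Set.MapsTo ⇑P (Submodule.span ℂ (Set.range G) : Set _)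
        (Submodule.span ℂ (G '' Ev) : Set _) := by
      intro x hx
      have hle : Submodule.map P.toLinearMap (Submodule.span ℂ (Set.range G)) ≤
          Submodule.span ℂ (G '' Ev) := by
        rw [Submodule.map_span, Submodule.span_le]
        rintro _ ⟨_, ⟨n, rfl⟩, rfl⟩
        rcases hGparity n with h | h
        · have hPn : P (G n) = G n := by rw [hPapp, h, half]
          rw [ContinuousLinearMap.coe_coe, hPn]
          exact Submodule.subset_span ⟨n, h, rfl⟩
        · have hPn : P (G n) = 0 := by rw [hPapp, h, add_neg_cancel, smul_zero]
          rw [ContinuousLinearMap.coe_coe, hPn]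
          exact Submodule.zero_mem _
      exact hle ⟨x, hx, rfl⟩
    have := map_mem_closure P.continuous (hGcomplete g) hmaps
    rwa [hPg] at this
  have hdensOd : (Hm : Set (Lp ℂ 2 (μIoo a))) ⊆
      closure (Submodule.span ℂ (G '' Od) : Set (Lp ℂ 2 (μIoo a))) := by
    intro g hg
    have hJg : Jr g = -g := hg
    set P : Lp ℂ 2 (μIoo a) →L[ℂ] Lp ℂ 2 (μIoo a) :=
      (2:ℂ)⁻¹ • (ContinuousLinearMap.id ℂ _ - Jr) with hPdef
    have hPapp : ∀ u, P u = (2:ℂ)⁻¹ • (u - Jr u) := fun u => by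
      simp [hPdef, ContinuousLinearMap.smul_apply, ContinuousLinearMap.sub_apply]
    have hPg : P g = g := by rw [hPapp, hJg, sub_neg_eq_add, half]
    have hmaps : Set.MapsTo ⇑P (Submodule.span ℂ (Set.range G) : Set _)
        (Submodule.span ℂ (G '' Od) : Set _) := by
      intro x hx
      have hle : Submodule.map P.toLinearMap (Submodule.span ℂ (Set.range G)) ≤
          Submodule.span ℂ (G '' Od) := by
        rw [Submodule.map_span, Submodule.span_le]
        rintro _ ⟨_, ⟨n, rfl⟩, rfl⟩
        rcases hGparity n with h | h
        · have hPn : P (G n) = 0 := by rw [hPapp, h, sub_self, smul_zero]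
          rw [ContinuousLinearMap.coe_coe, hPn]
          exact Submodule.zero_mem _
        · have hPn : P (G n) = G n := by rw [hPapp, h, sub_neg_eq_add, half]
          rw [ContinuousLinearMap.coe_coe, hPn]
          exact Submodule.subset_span ⟨n, h, rfl⟩
      exact hle ⟨x, hx, rfl⟩
    have := map_mem_closure P.continuous (hGcomplete g) hmaps
    rwa [hPg] at this
  have hclEv : closure (Submodule.span ℂ (G '' Ev) : Set (Lp ℂ 2 (μIoo a))) =
      (Hp : Set (Lp ℂ 2 (μIoo a))) :=
    Set.Subset.antisymm (closure_minimal hspanEv hHpc) hdensEv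
  have hclOd : closure (Submodule.span ℂ (G '' Od) : Set (Lp ℂ 2 (μIoo a))) =
      (Hm : Set (Lp ℂ 2 (μIoo a))) :=
    Set.Subset.antisymm (closure_minimal hspanOd hHmc) hdensOd
  -- identification of Mpos and Mneg
  have himgEv : F '' Ev = ⇑Em '' (G '' Ev) := (Set.image_image Em G Ev).symm
  have himgOd : F '' Od = ⇑Em '' (G '' Od) := (Set.image_image Em G Od).symm
  have MposEq : Mpos Jr F = Submodule.map Em.toLinearMap Hp := by
    apply SetLike.ext'
    rw [Submodule.map_coe]
    simp only [Mpos, Submodule.topologicalClosure_coe]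
    rw [hNpos, himgEv, ← ContinuousLinearMap.coe_coe Em, Submodule.span_image, Submodule.map_coe,
      ContinuousLinearMap.coe_coe,
      ← Em_image_closure Em hEm, hclEv]
  have MnegEq : Mneg Jr F = Submodule.map Em.toLinearMap Hm := by
    apply SetLike.ext'
    rw [Submodule.map_coe]
    simp only [Mneg, Submodule.topologicalClosure_coe]
    rw [hNneg, himgOd, ← ContinuousLinearMap.coe_coe Em, Submodule.span_image, Submodule.map_coe,
      ContinuousLinearMap.coe_coe,
      ← Em_image_closure Em hEm, hclOd]
  -- positivity / negativity
  have hPosMp : IsPos Jr (Submodule.map Em.toLinearMap Hp) := by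
    constructor
    · rw [Submodule.map_coe]
      exact Em_image_isClosed Em hEm hHpc
    · rintro _ ⟨g, hg, rfl⟩ hne
      have hg0 : g ≠ 0 := fun h => hne (by rw [h, map_zero])
      rw [ContinuousLinearMap.coe_coe, key]
      show (0:ℝ) < (⟪Jr g, g⟫).re
      rw [(hmemHp g).mp hg, inner_self_c, Complex.ofReal_re]
      exact pow_pos (norm_pos_iff.mpr hg0) 2
  have hNegMm : IsNeg Jr (Submodule.map Em.toLinearMap Hm) := by
    constructor
    · rw [Submodule.map_coe]
      exact Em_image_isClosed Em hEm hHmc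
    · rintro _ ⟨g, hg, rfl⟩ hne
      have hg0 : g ≠ 0 := fun h => hne (by rw [h, map_zero])
      rw [ContinuousLinearMap.coe_coe, key]
      show (⟪Jr g, g⟫).re < 0
      rw [(hmemHm g).mp hg, inner_neg_left, inner_self_c, Complex.neg_re, Complex.ofReal_re]
      have : (0:ℝ) < ‖g‖ ^ 2 := pow_pos (norm_pos_iff.mpr hg0) 2
      linarith
  -- decomposition
  have hdecomp : ∀ g : Lp ℂ 2 (μIoo a), ∃ gp ∈ Hp, ∃ gm ∈ Hm, g = gp + gm := by
    intro g
    refine ⟨(2:ℂ)⁻¹ • (g + Jr g), ?_, (2:ℂ)⁻¹ • (g - Jr g), ?_, ?_⟩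
    · show Jr _ = _
      rw [_root_.map_smul, map_add, hinv]
      congr 1
      abel
    · show Jr _ = _
      rw [_root_.map_smul, map_sub, hinv, ← smul_neg, neg_sub]
    · rw [← smul_add, show (g + Jr g) + (g - Jr g) = (g + g) + (Jr g - Jr g) by abel,
        sub_self, add_zero, half]
  refine ⟨c ^ 2, d ^ 2, by positivity, ?_, ?_, ?_, ?_, ?_⟩
  · -- c² ≤ d²
    have hcd : c ≤ d := le_trans (hGbdd 0).1 (hGbdd 0).2
    exact pow_le_pow_left₀ hc.le hcd 2
  · -- maximal positivity
    rw [MposEq]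
    refine ⟨hPosMp, ?_⟩
    intro M' hM' hle
    refine le_antisymm ?_ hle
    intro f hf
    obtain ⟨g, rfl⟩ := (Em_bij Em hEm).2 f
    obtain ⟨gp, hgp, gm, hgm, hsum⟩ := hdecomp g
    have hEmgp : Em gp ∈ M' := hle ⟨gp, hgp, rfl⟩
    have hEmgm : Em gm = Em g - Em gp := by
      rw [hsum, map_add]
      abel
    have hzero : Em gm = 0 := by
      by_contra hne
      have hpos := hM'.2 (Em gm) (hEmgm ▸ sub_mem hf hEmgp) hne
      rw [key] at hpos
      have : (⟪Jr gm, gm⟫).re = -‖gm‖ ^ 2 := by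
        rw [(hmemHm gm).mp hgm, inner_neg_left, inner_self_c, Complex.neg_re,
          Complex.ofReal_re]
      rw [show indef Jr gm gm = ⟪Jr gm, gm⟫ from rfl, this] at hpos
      nlinarith [sq_nonneg ‖gm‖]
    have : Em g = Em gp := by
      have := hEmgm
      rw [hzero] at this
      exact sub_eq_zero.mp this.symm
    rw [this]
    exact ⟨gp, hgp, rfl⟩
  · -- maximal negativity
    rw [MnegEq]
    refine ⟨hNegMm, ?_⟩
    intro M' hM' hle
    refine le_antisymm ?_ hle
    intro f hf
    obtain ⟨g, rfl⟩ := (Em_bij Em hEm).2 f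
    obtain ⟨gp, hgp, gm, hgm, hsum⟩ := hdecomp g
    have hEmgm : Em gm ∈ M' := hle ⟨gm, hgm, rfl⟩
    have hEmgp : Em gp = Em g - Em gm := by
      rw [hsum, map_add]
      abel
    have hzero : Em gp = 0 := by
      by_contra hne
      have hneg := hM'.2 (Em gp) (hEmgp ▸ sub_mem hf hEmgm) hne
      rw [key] at hneg
      have : (⟪Jr gp, gp⟫).re = ‖gp‖ ^ 2 := by
        rw [(hmemHp gp).mp hgp, inner_self_c, Complex.ofReal_re]
      rw [show indef Jr gp gp = ⟪Jr gp, gp⟫ from rfl, this] at hneg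
      nlinarith [sq_nonneg ‖gp‖]
    have : Em g = Em gm := by
      have := hEmgp
      rw [hzero] at this
      exact sub_eq_zero.mp this.symm
    rw [this]
    exact ⟨gm, hgm, rfl⟩
  · -- frame bounds on the positive part
    intro f hf
    rw [hNpos] at hf ⊢
    rw [himgEv, ← ContinuousLinearMap.coe_coe Em, Submodule.span_image] at hf
    obtain ⟨g, hg, rfl⟩ := hf
    simp only [ContinuousLinearMap.coe_coe]
    have hJg : Jr g = g := (hmemHp g).mp (hspanEv hg)
    have habs : |(indef Jr (Em g) (Em g)).re| = ‖g‖ ^ 2 := by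
      rw [key, show indef Jr g g = ⟪Jr g, g⟫ from rfl, hJg, inner_self_c,
        Complex.ofReal_re, abs_of_nonneg (sq_nonneg _)]
    have htc : ∀ n : Ev, ‖indef Jr (Em g) (F ↑n)‖ ^ 2 = ‖⟪g, G ↑n⟫‖ ^ 2 := by
      intro n
      rw [hF]
      show ‖indef Jr (Em g) (Em (G ↑n))‖ ^ 2 = _
      rw [key, show indef Jr g (G ↑n) = ⟪Jr g, G ↑n⟫ from rfl, hJg]
    obtain ⟨h1, h2⟩ := frame_core G Ev hGorth c d hc hGbdd g hg
    constructor
    · rw [habs, tsum_congr htc]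
      exact h1
    · rw [habs, tsum_congr htc]
      exact h2
  · -- frame bounds on the negative part
    intro f hf
    rw [hNneg] at hf ⊢
    rw [himgOd, ← ContinuousLinearMap.coe_coe Em, Submodule.span_image] at hf
    obtain ⟨g, hg, rfl⟩ := hf
    simp only [ContinuousLinearMap.coe_coe]
    have hJg : Jr g = -g := (hmemHm g).mp (hspanOd hg)
    have habs : |(indef Jr (Em g) (Em g)).re| = ‖g‖ ^ 2 := by
      rw [key, show indef Jr g g = ⟪Jr g, g⟫ from rfl, hJg, inner_neg_left, inner_self_c,
        Complex.neg_re, Complex.ofReal_re, abs_neg, abs_of_nonneg (sq_nonneg _)]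
    have htc : ∀ n : Od, ‖indef Jr (Em g) (F ↑n)‖ ^ 2 = ‖⟪g, G ↑n⟫‖ ^ 2 := by
      intro n
      rw [hF]
      show ‖indef Jr (Em g) (Em (G ↑n))‖ ^ 2 = _
      rw [key, show indef Jr g (G ↑n) = ⟪Jr g, G ↑n⟫ from rfl, hJg, inner_neg_left, norm_neg]
    obtain ⟨h1, h2⟩ := frame_core G Od hGorth c d hc hGbdd g hg
    constructor
    · rw [habs, tsum_congr htc]
      exact h1
    · rw [habs, tsum_congr htc]
      exact h2

end KreinStmt
end
end
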